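/- Let G be a connected chordal graph. The clique tree of G is unique if and only if: (i) every minimal vertex separator S of G has multiplicity ν(S) = 1 (equivalently, the number of minimal vertex separators equals the number of maximal cliques minus one), and (ii) no two distinct minimal vertex separators of G are comparable under inclusion. -/

import Mathlib

namespace Chordal

variable {V : Type*} [Fintype V]

/-- A closed walk has a chord: an edge of `G` joining two support vertices that is
not an edge of the walk. -/
def HasChord (G : SimpleGraph V) {u : V} (c : G.Walk u u) : Prop :=
  ∃ v w, v ∈ c.support ∧ w ∈ c.support ∧ G.Adj v w ∧ s(v, w) ∉ c.edges

/-- A graph is chordal if every cycle of length at least 4 has a chord. -/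
def IsChordal (G : SimpleGraph V) : Prop :=
  ∀ ⦃u : V⦄ (c : G.Walk u u), c.IsCycle → 4 ≤ c.length → HasChord G c

/-- A maximal clique of `G`. -/
def IsMaxClique (G : SimpleGraph V) (s : Set V) : Prop :=
  G.IsClique s ∧ ∀ t : Set V, G.IsClique t → s ⊆ t → s = t

/-- A maximal clique of the induced subgraph `G(W)`. -/
def IsMaxCliqueOn (G : SimpleGraph V) (W s : Set V) : Prop :=
  s ⊆ W ∧ G.IsClique s ∧ ∀ t : Set V, t ⊆ W → G.IsClique t → s ⊆ t → s = t

/-- There is a walk from `u` to `w` staying inside `W` and avoiding `S`. -/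
def ReachWithin (G : SimpleGraph V) (W S : Set V) (u w : V) : Prop :=
  ∃ p : G.Walk u w, ∀ x ∈ p.support, x ∈ W ∧ x ∉ S

/-- `S` separates `u` from `w` in the induced subgraph `G(W)`. -/
def SeparatesOn (G : SimpleGraph V) (W S : Set V) (u w : V) : Prop :=
  u ∈ W ∧ w ∈ W ∧ u ∉ S ∧ w ∉ S ∧ u ≠ w ∧ ¬ ReachWithin G W S u w

/-- `S` is a minimal vertex separator of the induced subgraph `G(W)`:
for some pair `u, w` it is an inclusion-minimal set separating `u` from `w`. -/
def IsMinSeparatorOn (G : SimpleGraph V) (W S : Set V) : Prop :=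
  S ⊆ W ∧ ∃ u w, SeparatesOn G W S u w ∧ ∀ S' ⊂ S, ¬ SeparatesOn G W S' u w

/-- `S` is a minimal vertex separator of `G`. -/
def IsMinSeparator (G : SimpleGraph V) (S : Set V) : Prop :=
  IsMinSeparatorOn G Set.univ S

/-- `S` is inclusion-minimal among the minimal vertex separators of `G`. -/
def IsInclMinSeparator (G : SimpleGraph V) (S : Set V) : Prop :=
  IsMinSeparator G S ∧ ∀ S' : Set V, IsMinSeparator G S' → S' ⊆ S → S' = S

/-- `Γ` is a connected component of `G(V \ S)`. -/
def IsCompOutside (G : SimpleGraph V) (S Γ : Set V) : Prop :=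
  ∃ u, u ∉ S ∧ Γ = {w | ReachWithin G Set.univ S u w}

/-- A vertex is simplicial if its neighborhood is a clique. -/
def IsSimplicial (G : SimpleGraph V) (v : V) : Prop :=
  G.IsClique (G.neighborSet v)

/-- The simplicial component of a clique `C`: the simplicial vertices of `G` in `C`. -/
def Simp (G : SimpleGraph V) (C : Set V) : Set V :=
  {v ∈ C | IsSimplicial G v}

/-- The non-simplicial component of a clique `C`. -/
def Sep (G : SimpleGraph V) (C : Set V) : Set V :=
  C \ Simp G C

/-- `C` is a boundary clique (simply separated clique): a maximal clique such that
`Sep C = C ∩ C'` for some other maximal clique `C'`. -/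
def IsBoundaryClique (G : SimpleGraph V) (C : Set V) : Prop :=
  IsMaxClique G C ∧ ∃ C' : Set V, IsMaxClique G C' ∧ C' ≠ C ∧ Sep G C = C ∩ C'

/-- The induced subgraph on `W`, kept on the same vertex type. -/
def restrictS (G : SimpleGraph V) (W : Set V) : SimpleGraph V where
  Adj u v := G.Adj u v ∧ u ∈ W ∧ v ∈ W
  symm := ⟨fun u v ⟨h, hu, hv⟩ => ⟨h.symm, hv, hu⟩⟩
  loopless := ⟨fun u ⟨h, _, _⟩ => G.ne_of_adj h rfl⟩

/-- The vertex subset `A` induces a connected subgraph of `T`. -/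
def ConnOn {α : Type*} (T : SimpleGraph α) (A : Set α) : Prop :=
  A.Nonempty ∧ ∀ u ∈ A, ∀ v ∈ A, ∃ p : T.Walk u v, ∀ x ∈ p.support, x ∈ A

/-- The induced subgraph `G(W)` is complete. -/
def CompleteOn (G : SimpleGraph V) (W : Set V) : Prop :=
  ∀ u ∈ W, ∀ v ∈ W, u ≠ v → G.Adj u v

/-- A clique tree of `G`: a tree on the maximal cliques of `G` satisfying the
junction property. -/
def IsCliqueTree (G : SimpleGraph V) (T : SimpleGraph {s : Set V // IsMaxClique G s}) : Prop :=
  T.IsTree ∧ ∀ (C₁ C₂ : {s : Set V // IsMaxClique G s}) (p : T.Walk C₁ C₂), p.IsPath →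
    ∀ C₃ ∈ p.support, C₁.val ∩ C₂.val ⊆ C₃.val

/-- A leaf (endpoint) of a graph: a vertex with exactly one neighbor. -/
def IsLeaf {α : Type*} (T : SimpleGraph α) (a : α) : Prop :=
  ∃! b, T.Adj a b

/-- The union of the cliques preceding position `k` in a sequence. -/
def prefUnion {K : ℕ} (f : Fin K → Set V) (k : Fin K) : Set V :=
  {v | ∃ j, j < k ∧ v ∈ f j}

/-- A perfect sequence of the maximal cliques of the induced subgraph `G(W)`:
an enumeration of the maximal cliques of `G(W)` with the running intersection property. -/
def IsPerfectSeqOn (G : SimpleGraph V) (W : Set V) {K : ℕ} (f : Fin K → Set V) : Prop :=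
  Function.Injective f ∧ (∀ s : Set V, IsMaxCliqueOn G W s ↔ ∃ k, f k = s) ∧
  ∀ k : Fin K, 0 < (k : ℕ) →
    G.IsClique (prefUnion f k ∩ f k) ∧ ∃ k' : Fin K, k' < k ∧ prefUnion f k ∩ f k ⊆ f k'

/-- A perfect sequence of the maximal cliques of `G`. -/
def IsPerfectSeq (G : SimpleGraph V) {K : ℕ} (f : Fin K → Set V) : Prop :=
  Function.Injective f ∧ (∀ s : Set V, IsMaxClique G s ↔ ∃ k, f k = s) ∧
  ∀ k : Fin K, 0 < (k : ℕ) →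
    G.IsClique (prefUnion f k ∩ f k) ∧ ∃ k' : Fin K, k' < k ∧ prefUnion f k ∩ f k ⊆ f k'

/-- The closed neighborhood of a vertex. -/
def closedNbhd (G : SimpleGraph V) (v : V) : Set V :=
  insert v (G.neighborSet v)


/-! ### Auxiliary development -/

open SimpleGraph

section Basics

variable {G : SimpleGraph V}

lemma exists_maxClique_superset {s : Set V} (hs : G.IsClique s) :
    ∃ t : Set V, IsMaxClique G t ∧ s ⊆ t := by
  obtain ⟨t, ⟨ht, hst⟩, hmax⟩ := Set.Finite.exists_maximalFor id
    {t : Set V | G.IsClique t ∧ s ⊆ t} (Set.toFinite _) ⟨s, hs, subset_rfl⟩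
  exact ⟨t, ⟨ht, fun u hu htu => le_antisymm htu (hmax ⟨hu, hst.trans htu⟩ htu)⟩, hst⟩

lemma exists_maxClique_mem (v : V) : ∃ t : Set V, IsMaxClique G t ∧ v ∈ t := by
  obtain ⟨t, ht, hsub⟩ := exists_maxClique_superset (G := G) (s := {v}) (by simp [SimpleGraph.isClique_singleton])
  exact ⟨t, ht, hsub rfl⟩

lemma exists_maxClique_adj {u v : V} (h : G.Adj u v) :
    ∃ t : Set V, IsMaxClique G t ∧ u ∈ t ∧ v ∈ t := by
  have hc : G.IsClique {u, v} := SimpleGraph.isClique_pair.mpr fun _ => h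
  obtain ⟨t, ht, hsub⟩ := exists_maxClique_superset hc
  exact ⟨t, ht, hsub (by simp), hsub (by simp)⟩

lemma maxClique_diff_nonempty {C D : Set V} (hC : IsMaxClique G C) (hD : IsMaxClique G D)
    (hne : C ≠ D) : (C \ D).Nonempty := by
  rw [Set.diff_nonempty]
  intro hsub
  exact hne (hC.2 D hD.1 hsub)

lemma ReachWithin.rfl' {S : Set V} {x : V} (hx : x ∉ S) : ReachWithin G Set.univ S x x :=
  ⟨Walk.nil, by simp [hx]⟩

lemma ReachWithin.symm' {S : Set V} {x y : V} (h : ReachWithin G Set.univ S x y) :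
    ReachWithin G Set.univ S y x := by
  obtain ⟨p, hp⟩ := h
  exact ⟨p.reverse, fun z hz => hp z (by simpa [Walk.support_reverse] using hz)⟩

lemma ReachWithin.trans' {S : Set V} {x y z : V} (h : ReachWithin G Set.univ S x y)
    (h' : ReachWithin G Set.univ S y z) : ReachWithin G Set.univ S x z := by
  obtain ⟨p, hp⟩ := h; obtain ⟨q, hq⟩ := h'
  refine ⟨p.append q, fun a ha => ?_⟩
  rcases (Walk.mem_support_append_iff _ _).mp ha with h | h
  exacts [hp a h, hq a h]

lemma ReachWithin.of_adj {S : Set V} {x y : V} (h : G.Adj x y) (hx : x ∉ S) (hy : y ∉ S) :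
    ReachWithin G Set.univ S x y :=
  ⟨Walk.cons h Walk.nil, by
    intro z hz
    simp only [Walk.support_cons, Walk.support_nil, List.mem_cons, List.mem_singleton] at hz
    rcases hz with rfl | rfl | h'
    · exact ⟨trivial, hx⟩
    · exact ⟨trivial, hy⟩
    · cases h'⟩

lemma ReachWithin.of_clique {S C : Set V} (hC : G.IsClique C) {x y : V}
    (hx : x ∈ C) (hy : y ∈ C) (hxS : x ∉ S) (hyS : y ∉ S) :
    ReachWithin G Set.univ S x y := by
  rcases eq_or_ne x y with rfl | hne
  · exact ReachWithin.rfl' hxS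
  · exact ReachWithin.of_adj (hC hx hy hne) hxS hyS

end Basics

/-- The type of maximal cliques of `G`. -/
abbrev MCl (G : SimpleGraph V) := {s : Set V // IsMaxClique G s}

/-- Delete the edge between `A` and `B`. -/
def eDel {α : Type*} (T : SimpleGraph α) (A B : α) : SimpleGraph α :=
  T \ fromEdgeSet {s(A, B)}

section EDel

variable {α : Type*} {T : SimpleGraph α} {A B : α}

lemma eDel_adj {x y : α} : (eDel T A B).Adj x y ↔ T.Adj x y ∧ s(x, y) ≠ s(A, B) := by
  constructor
  · rintro ⟨h1, h2⟩
    refine ⟨h1, fun he => h2 ?_⟩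
    rw [fromEdgeSet_adj]
    exact ⟨by simp [he], h1.ne⟩
  · rintro ⟨h1, h2⟩
    refine ⟨h1, fun he => ?_⟩
    rw [fromEdgeSet_adj] at he
    exact h2 (by simpa using he.1)

lemma eDel_le : eDel T A B ≤ T := sdiff_le

lemma mem_eDel_edgeSet {e : Sym2 α} (he : e ∈ T.edgeSet) (hne : e ≠ s(A, B)) :
    e ∈ (eDel T A B).edgeSet := by
  rw [eDel, edgeSet_sdiff, edgeSet_fromEdgeSet]
  exact ⟨he, by simp [hne]⟩

/-- A walk in `T` avoiding the edge `s(A,B)` gives reachability in `eDel T A B`. -/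
lemma reachable_eDel_of_walk {X Y : α} (p : T.Walk X Y) (he : s(A, B) ∉ p.edges) :
    (eDel T A B).Reachable X Y :=
  ⟨p.transfer _ (fun e hep => mem_eDel_edgeSet (p.edges_subset_edgeSet hep)
    (fun h => he (h ▸ hep)))⟩

lemma reachable_eDel_side_aux {X Z : α} (w : T.Walk X Z) :
    (eDel T A B).Reachable X Z ∨ (eDel T A B).Reachable X A ∨ (eDel T A B).Reachable X B := by
  induction w with
  | nil => exact Or.inl (Reachable.refl _)
  | @cons x y z h p ih =>
    rcases eq_or_ne s(x, y) s(A, B) with he | he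
    · rw [Sym2.eq_iff] at he
      rcases he with ⟨rfl, rfl⟩ | ⟨rfl, rfl⟩
      · exact Or.inr (Or.inl (Reachable.refl _))
      · exact Or.inr (Or.inr (Reachable.refl _))
    · have hadj : (eDel T A B).Adj x y := eDel_adj.mpr ⟨h, he⟩
      rcases ih with h' | h' | h'
      · exact Or.inl (hadj.reachable.trans h')
      · exact Or.inr (Or.inl (hadj.reachable.trans h'))
      · exact Or.inr (Or.inr (hadj.reachable.trans h'))

lemma reachable_eDel_side (hc : T.Connected) (A B : α) (X : α) :
    (eDel T A B).Reachable X A ∨ (eDel T A B).Reachable X B := by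
  obtain ⟨w⟩ := hc.preconnected X A
  rcases reachable_eDel_side_aux (A := A) (B := B) w with h | h | h
  · exact Or.inl h
  · exact Or.inl h
  · exact Or.inr h

lemma not_reachable_eDel (ha : T.IsAcyclic) (hAB : T.Adj A B) :
    ¬ (eDel T A B).Reachable A B := by
  have hb := isAcyclic_iff_forall_edge_isBridge.mp ha ((mem_edgeSet T).mpr hAB)
  exact isBridge_iff.mp hb

end EDel

section TreeMachinery

variable {G : SimpleGraph V} {T : SimpleGraph (MCl G)}

/-- Junction property gives, for each vertex, connectivity of the cliques containing it. -/
lemma jp_path (hT : IsCliqueTree G T) (X Y : MCl G) :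
    ∃ p : T.Walk X Y, p.IsPath ∧ ∀ Z ∈ p.support, X.val ∩ Y.val ⊆ Z.val := by
  classical
  obtain ⟨w⟩ := hT.1.1.preconnected X Y
  exact ⟨w.bypass, w.bypass_isPath, fun Z hZ => hT.2 X Y w.bypass w.bypass_isPath Z hZ⟩

/-- All maximal cliques containing a vertex outside the label of an edge lie on the
same side of that edge. -/
lemma cliques_same_side (hT : IsCliqueTree G T) (hAB : T.Adj A B) {v : V}
    (hv : v ∉ A.val ∩ B.val) {X Y : MCl G} (hvX : v ∈ X.val) (hvY : v ∈ Y.val) :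
    (eDel T A B).Reachable X Y := by
  obtain ⟨p, hp, hall⟩ := jp_path hT X Y
  by_cases he : s(A, B) ∈ p.edges
  · have hA : A ∈ p.support := p.fst_mem_support_of_mem_edges he
    have hB : B ∈ p.support := p.snd_mem_support_of_mem_edges he
    exact absurd ⟨hall A hA ⟨hvX, hvY⟩, hall B hB ⟨hvX, hvY⟩⟩ hv
  · exact reachable_eDel_of_walk p he

/-- A walk in `G` avoiding the label of a tree edge keeps the cliques of its endpoints
on the same side of that edge. -/
lemma sep_walk_side (hT : IsCliqueTree G T) (hAB : T.Adj A B) :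
    ∀ {u w : V} (q : G.Walk u w), (∀ x ∈ q.support, x ∉ A.val ∩ B.val) →
    ∀ {X Y : MCl G}, u ∈ X.val → w ∈ Y.val → (eDel T A B).Reachable X Y := by
  intro u w q
  induction q with
  | nil =>
    intro hq X Y huX hwY
    exact cliques_same_side hT hAB (hq _ (Walk.start_mem_support _)) huX hwY
  | @cons x y z h p ih =>
    intro hq X Y huX hwY
    obtain ⟨E, hE, hxE, hyE⟩ := exists_maxClique_adj h
    have hx : x ∉ A.val ∩ B.val := hq _ (Walk.start_mem_support _)
    have step : (eDel T A B).Reachable X ⟨E, hE⟩ := cliques_same_side hT hAB hx huX hxE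
    have rest : (eDel T A B).Reachable ⟨E, hE⟩ Y :=
      ih (fun a ha => hq a (by simp [Walk.support_cons, ha])) hyE hwY
    exact step.trans rest

/-- The label of any edge of a clique tree is a minimal vertex separator. -/
lemma label_isMinSeparator (hT : IsCliqueTree G T) {A B : MCl G} (hAB : T.Adj A B) :
    IsMinSeparator G (A.val ∩ B.val) := by
  obtain ⟨u, huA, huB⟩ := maxClique_diff_nonempty A.2 B.2 (fun h => hAB.ne (Subtype.ext h))
  obtain ⟨w, hwB, hwA⟩ := maxClique_diff_nonempty B.2 A.2 (fun h => hAB.ne' (Subtype.ext h))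
  refine ⟨Set.subset_univ _, u, w, ⟨trivial, trivial, fun h => huB h.2, fun h => hwA h.1,
    fun h => hwA (h ▸ huA), ?_⟩, ?_⟩
  · rintro ⟨q, hq⟩
    exact not_reachable_eDel hT.1.2 hAB
      (sep_walk_side hT hAB q (fun x hx => (hq x hx).2) huA hwB)
  · rintro S' hS' ⟨-, -, -, -, -, hnr⟩
    obtain ⟨s, hsAB, hsS'⟩ := Set.exists_of_ssubset hS'
    refine hnr (ReachWithin.trans' (y := s) ?_ ?_)
    · exact ReachWithin.of_clique A.2.1 huA hsAB.1 (fun h => huB (hS'.subset h).2)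
        hsS'
    · exact ReachWithin.of_clique B.2.1 hsAB.2 hwB hsS'
        (fun h => hwA (hS'.subset h).1)

/-- Along any tree walk between a clique containing `x` and one containing `y`,
either some edge label is contained in `S`, or `x` and `y` are connected avoiding `S`. -/
lemma chain_lemma {S : Set V} : ∀ {D E : MCl G} (p : T.Walk D E) {x y : V},
    x ∈ D.val → x ∉ S → y ∈ E.val → y ∉ S →
    (∃ X Y : MCl G, T.Adj X Y ∧ s(X, Y) ∈ p.edges ∧ X.val ∩ Y.val ⊆ S) ∨
      ReachWithin G Set.univ S x y := by
  intro D E p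
  induction p with
  | @nil C =>
    intro x y hx hxS hy hyS
    exact Or.inr (ReachWithin.of_clique C.2.1 hx hy hxS hyS)
  | @cons C F E' h q ih =>
    intro x y hx hxS hy hyS
    by_cases hsub : C.val ∩ F.val ⊆ S
    · exact Or.inl ⟨C, F, h, by simp, hsub⟩
    · obtain ⟨z, hzDF, hzS⟩ := Set.not_subset.mp hsub
      rcases ih hzDF.2 hzS hy hyS with ⟨X, Y, hXY, hmem, hXYS⟩ | hrw
      · exact Or.inl ⟨X, Y, hXY, by simp [hmem], hXYS⟩
      · exact Or.inr ((ReachWithin.of_clique C.2.1 hx hzDF.1 hxS hzS).trans' hrw)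

/-- Every minimal vertex separator is the label of some edge of any clique tree. -/
lemma minSeparator_is_label (hT : IsCliqueTree G T) {S : Set V}
    (hS : IsMinSeparator G S) : ∃ A B : MCl G, T.Adj A B ∧ A.val ∩ B.val = S := by
  classical
  obtain ⟨-, u, w, ⟨-, -, huS, hwS, huw, hnr⟩, hmin⟩ := hS
  obtain ⟨Cu, hCu, huCu⟩ := exists_maxClique_mem (G := G) u
  obtain ⟨Cw, hCw, hwCw⟩ := exists_maxClique_mem (G := G) w
  obtain ⟨w0⟩ := hT.1.1.preconnected ⟨Cu, hCu⟩ ⟨Cw, hCw⟩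
  have hpath := w0.bypass_isPath
  rcases chain_lemma w0.bypass huCu huS hwCw hwS with ⟨X, Y, hXY, hmem, hsubS⟩ | hrw
  · -- the two sides of edge (X,Y) separate Cu from Cw
    have hnreach : ¬ (eDel T X Y).Reachable ⟨Cu, hCu⟩ ⟨Cw, hCw⟩ := by
      rintro ⟨q⟩
      have hedges : ∀ e ∈ q.bypass.edges, e ∈ T.edgeSet := fun e hep =>
        edgeSet_mono eDel_le (q.bypass.edges_subset_edgeSet hep)
      have hq2 : (q.bypass.transfer T hedges).IsPath :=
        Walk.IsPath.transfer _ q.bypass_isPath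
      have hEq := hT.1.2.path_unique ⟨w0.bypass, hpath⟩ ⟨q.bypass.transfer T hedges, hq2⟩
      have hmem' : s(X, Y) ∈ (q.bypass.transfer T hedges).edges := by
        have hv : w0.bypass = q.bypass.transfer T hedges := congrArg Subtype.val hEq
        rwa [hv] at hmem
      rw [Walk.edges_transfer] at hmem'
      have : s(X, Y) ∈ (eDel T X Y).edgeSet := q.bypass.edges_subset_edgeSet hmem'
      rw [eDel, edgeSet_sdiff, edgeSet_fromEdgeSet] at this
      exact this.2 ⟨rfl, by simpa using hXY.ne⟩
    have hsepL : SeparatesOn G Set.univ (X.val ∩ Y.val) u w :=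
      ⟨trivial, trivial, fun h => huS (hsubS h), fun h => hwS (hsubS h), huw, by
        rintro ⟨q, hq⟩
        exact hnreach (sep_walk_side hT hXY q (fun x hx => (hq x hx).2) huCu hwCw)⟩
    have heq : X.val ∩ Y.val = S := by
      by_contra hne
      exact hmin _ (Set.ssubset_iff_subset_ne.mpr ⟨hsubS, hne⟩) hsepL
    exact ⟨X, Y, hXY, heq⟩
  · exact absurd hrw hnr

end TreeMachinery
section Exchange

variable {G : SimpleGraph V} {T : SimpleGraph (MCl G)}

/-- The tree obtained by exchanging the edge `s(A,B)` for the edge `s(A,D)`. -/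
def exch {α : Type*} (T : SimpleGraph α) (A B D : α) : SimpleGraph α :=
  eDel T A B ⊔ fromEdgeSet {s(A, D)}

lemma exch_adj {α : Type*} {T : SimpleGraph α} {A B D x y : α} :
    (exch T A B D).Adj x y ↔ (eDel T A B).Adj x y ∨ (s(x, y) = s(A, D) ∧ x ≠ y) := by
  simp [exch, sup_adj, fromEdgeSet_adj]

lemma eDel_le_exch {α : Type*} {T : SimpleGraph α} {A B D : α} :
    eDel T A B ≤ exch T A B D := le_sup_left

/-- The junction property follows from per-vertex subtree connectivity. -/
lemma junction_of_jp {T2 : SimpleGraph (MCl G)} (ht : T2.IsTree)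
    (hjp : ∀ (v : V) (X Y : MCl G), v ∈ X.val → v ∈ Y.val →
      ∃ q : T2.Walk X Y, ∀ Z ∈ q.support, v ∈ Z.val) :
    IsCliqueTree G T2 := by
  classical
  refine ⟨ht, fun C₁ C₂ p hp C₃ hC₃ => fun v hv => ?_⟩
  obtain ⟨q, hq⟩ := hjp v C₁ C₂ hv.1 hv.2
  have hEq := ht.2.path_unique ⟨p, hp⟩ ⟨q.bypass, q.bypass_isPath⟩
  have hv' : p = q.bypass := congrArg Subtype.val hEq
  exact hq C₃ (q.support_bypass_subset (hv' ▸ hC₃))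

/-- Paths of the tree all of whose cliques contain `v`, within one side. -/
lemma jp_td (hT : IsCliqueTree G T) {A B : MCl G} {v : V} {P Q : MCl G}
    (hvP : v ∈ P.val) (hvQ : v ∈ Q.val) (hr : (eDel T A B).Reachable P Q) :
    ∃ q : (eDel T A B).Walk P Q, ∀ Z ∈ q.support, v ∈ Z.val := by
  classical
  obtain ⟨p, hp, hall⟩ := jp_path hT P Q
  obtain ⟨q0⟩ := hr
  have hedges : ∀ e ∈ q0.bypass.edges, e ∈ T.edgeSet := fun e hep =>
    edgeSet_mono eDel_le (q0.bypass.edges_subset_edgeSet hep)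
  have hq2 : (q0.bypass.transfer T hedges).IsPath := Walk.IsPath.transfer _ q0.bypass_isPath
  have hEq := hT.1.2.path_unique ⟨p, hp⟩ ⟨q0.bypass.transfer T hedges, hq2⟩
  have hv' : p = q0.bypass.transfer T hedges := congrArg Subtype.val hEq
  refine ⟨q0.bypass, fun Z hZ => ?_⟩
  have : Z ∈ p.support := by
    rw [hv', Walk.support_transfer]; exact hZ
  exact hall Z this ⟨hvP, hvQ⟩

variable {A B D : MCl G}

lemma exchange_isCliqueTree (hT : IsCliqueTree G T) (hAB : T.Adj A B)
    (hDB : (eDel T A B).Reachable D B) (hDne : D ≠ B) (hSD : A.val ∩ B.val ⊆ D.val) :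
    IsCliqueTree G (exch T A B D) ∧ ¬ T.Adj A D := by
  classical
  have hAD : A ≠ D := by
    rintro rfl
    exact not_reachable_eDel hT.1.2 hAB hDB
  have hnadj : ¬ T.Adj A D := by
    intro h
    have hne : s(A, D) ≠ s(A, B) := by
      intro hh
      rw [Sym2.eq_iff] at hh
      rcases hh with ⟨-, h2⟩ | ⟨h1, -⟩
      · exact hDne h2
      · exact hAB.ne h1
    have : (eDel T A B).Adj A D := eDel_adj.mpr ⟨h, hne⟩
    exact not_reachable_eDel hT.1.2 hAB (this.reachable.trans hDB)
  have hadjAD : (exch T A B D).Adj A D := exch_adj.mpr (Or.inr ⟨rfl, hAD⟩)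
  -- connectivity
  have hreachA : ∀ X, (exch T A B D).Reachable X A := by
    intro X
    rcases reachable_eDel_side hT.1.1 A B X with h | h
    · exact h.mono eDel_le_exch
    · exact ((h.mono eDel_le_exch).trans ((hDB.mono eDel_le_exch).symm)).trans
        hadjAD.symm.reachable
  have hconn2 : (exch T A B D).Connected := by
    haveI : Nonempty (MCl G) := ⟨A⟩
    exact ⟨fun X Y => (hreachA X).trans (hreachA Y).symm⟩
  -- acyclicity
  have hacyc : (exch T A B D).IsAcyclic := by
    intro X c hc
    by_cases he : s(A, D) ∈ c.edges
    · have hre : (exch T A B D \ fromEdgeSet {s(A, D)}).Reachable A D :=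
        (adj_and_reachable_delete_edges_iff_exists_cycle.mpr ⟨X, c, hc, he⟩).2
      have hle : exch T A B D \ fromEdgeSet {s(A, D)} ≤ eDel T A B := by
        intro x y hxy
        rw [sdiff_adj] at hxy
        rcases exch_adj.mp hxy.1 with h | h
        · exact h
        · exact absurd ((fromEdgeSet_adj _).mpr ⟨by simp [h.1], h.2⟩) hxy.2
      exact not_reachable_eDel hT.1.2 hAB ((hre.mono hle).trans hDB)
    · have hedges : ∀ e ∈ c.edges, e ∈ T.edgeSet := by
        intro e hep
        have h1 := c.edges_subset_edgeSet hep
        rw [exch, edgeSet_sup] at h1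
        rcases h1 with h1 | h1
        · exact edgeSet_mono eDel_le h1
        · rw [edgeSet_fromEdgeSet] at h1
          have he2 : e = s(A, D) := by simpa using h1.1
          exact absurd (he2 ▸ hep) he
      exact hT.1.2 (c.transfer T hedges) (hc.transfer hedges)
  -- junction property
  refine ⟨junction_of_jp ⟨hconn2, hacyc⟩ ?_, hnadj⟩
  intro v X Y hvX hvY
  obtain ⟨p, hp, hall⟩ := jp_path hT X Y
  by_cases he : s(A, B) ∈ p.edges
  · -- v belongs to A, B, D
    have hvA : v ∈ A.val := (hall A (p.fst_mem_support_of_mem_edges he) ⟨hvX, hvY⟩)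
    have hvB : v ∈ B.val := (hall B (p.snd_mem_support_of_mem_edges he) ⟨hvX, hvY⟩)
    have hvD : v ∈ D.val := hSD ⟨hvA, hvB⟩
    -- build walks within sides and lift to exch
    have lift : ∀ {P Q : MCl G}, v ∈ P.val → v ∈ Q.val → (eDel T A B).Reachable P Q →
        ∃ q : (exch T A B D).Walk P Q, ∀ Z ∈ q.support, v ∈ Z.val := by
      intro P Q hvP hvQ hr
      obtain ⟨q, hq⟩ := jp_td hT hvP hvQ hr
      refine ⟨q.transfer _ (fun e hep => edgeSet_mono eDel_le_exch
        (q.edges_subset_edgeSet hep)), ?_⟩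
      rw [Walk.support_transfer]; exact hq
    rcases reachable_eDel_side hT.1.1 A B X with hX | hX <;>
      rcases reachable_eDel_side hT.1.1 A B Y with hY | hY
    · obtain ⟨q, hq⟩ := lift hvX hvY (hX.trans hY.symm)
      exact ⟨q, hq⟩
    · -- X on A-side, Y on B-side
      obtain ⟨q1, hq1⟩ := lift hvX hvA hX
      obtain ⟨q2, hq2⟩ := lift hvD hvY (hDB.trans hY.symm)
      refine ⟨q1.append (Walk.cons hadjAD q2), ?_⟩
      intro Z hZ
      rcases (Walk.mem_support_append_iff _ _).mp hZ with h | h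
      · exact hq1 Z h
      · rcases List.mem_cons.mp (by simpa [Walk.support_cons] using h) with rfl | h'
        · exact hvA
        · exact hq2 Z h'
    · -- X on B-side, Y on A-side
      obtain ⟨q1, hq1⟩ := lift hvX hvD (hX.trans hDB.symm)
      obtain ⟨q2, hq2⟩ := lift hvA hvY hY.symm
      refine ⟨q1.append (Walk.cons hadjAD.symm q2), ?_⟩
      intro Z hZ
      rcases (Walk.mem_support_append_iff _ _).mp hZ with h | h
      · exact hq1 Z h
      · rcases List.mem_cons.mp (by simpa [Walk.support_cons] using h) with rfl | h'
        · exact hvD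
        · exact hq2 Z h'
    · obtain ⟨q, hq⟩ := lift hvX hvY (hX.trans hY.symm)
      exact ⟨q, hq⟩
  · -- path avoids the removed edge; lift directly
    have hedges : ∀ e ∈ p.edges, e ∈ (exch T A B D).edgeSet := by
      intro e hep
      exact edgeSet_mono eDel_le_exch
        (mem_eDel_edgeSet (p.edges_subset_edgeSet hep) (fun h => he (h ▸ hep)))
    refine ⟨p.transfer _ hedges, ?_⟩
    rw [Walk.support_transfer]
    exact fun Z hZ => hall Z hZ ⟨hvX, hvY⟩

lemma exchange_ne (hT : IsCliqueTree G T) (hAB : T.Adj A B)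
    (hDB : (eDel T A B).Reachable D B) (hDne : D ≠ B) (hSD : A.val ∩ B.val ⊆ D.val) :
    exch T A B D ≠ T := by
  obtain ⟨h1, hnadj⟩ := exchange_isCliqueTree hT hAB hDB hDne hSD
  intro h
  have hAD : A ≠ D := by
    rintro rfl
    exact not_reachable_eDel hT.1.2 hAB hDB
  exact hnadj (h ▸ exch_adj.mpr (Or.inr ⟨rfl, hAD⟩))

end Exchange
section Surgery

variable {G : SimpleGraph V}

lemma mem_edges_of_length_one {a b : V} {w : G.Walk a b} (h : w.length = 1) :
    s(a, b) ∈ w.edges := by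
  cases w with
  | nil => simp at h
  | cons hadj w' =>
    cases w' with
    | nil => simp
    | cons h2 w2 => simp [Walk.length_cons] at h

/-- Shortcut a walk along a chord. -/
lemma shortcut {x y z1 z2 : V} (p : G.Walk x y) (h1 : z1 ∈ p.support) (h2 : z2 ∈ p.support)
    (hadj : G.Adj z1 z2) (hne : s(z1, z2) ∉ p.edges) :
    ∃ q : G.Walk x y, q.length < p.length ∧ ∀ z ∈ q.support, z ∈ p.support := by
  classical
  have hspec := p.take_spec h1
  by_cases hz2 : z2 ∈ (p.dropUntil z1 h1).support
  · -- z1 occurs before z2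
    have hlen1 : (p.takeUntil z1 h1).length + (p.dropUntil z1 h1).length = p.length := by
      have := congrArg Walk.length hspec
      rwa [Walk.length_append] at this
    have hlen2 : ((p.dropUntil z1 h1).takeUntil z2 hz2).length
        + ((p.dropUntil z1 h1).dropUntil z2 hz2).length = (p.dropUntil z1 h1).length := by
      have := congrArg Walk.length ((p.dropUntil z1 h1).take_spec hz2)
      rwa [Walk.length_append] at this
    have hge2 : 2 ≤ ((p.dropUntil z1 h1).takeUntil z2 hz2).length := by
      rcases Nat.lt_or_ge ((p.dropUntil z1 h1).takeUntil z2 hz2).length 2 with hl | hl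
      · exfalso
        interval_cases hcase : ((p.dropUntil z1 h1).takeUntil z2 hz2).length
        · exact hadj.ne (Walk.eq_of_length_eq_zero hcase)
        · exact hne (p.edges_dropUntil_subset h1
            ((p.dropUntil z1 h1).edges_takeUntil_subset hz2 (mem_edges_of_length_one hcase)))
      · exact hl
    refine ⟨(p.takeUntil z1 h1).append (Walk.cons hadj ((p.dropUntil z1 h1).dropUntil z2 hz2)),
      ?_, ?_⟩
    · rw [Walk.length_append, Walk.length_cons]
      omega
    · intro z hz
      rcases (Walk.mem_support_append_iff _ _).mp hz with h | h
      · exact p.support_takeUntil_subset h1 h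
      · rw [Walk.support_cons] at h
        rcases List.mem_cons.mp h with rfl | h
        · exact h1
        · exact p.support_dropUntil_subset h1
            ((p.dropUntil z1 h1).support_dropUntil_subset hz2 h)
  · -- z2 occurs before z1
    have hz2' : z2 ∈ (p.takeUntil z1 h1).support := by
      have h2' := h2
      rw [← hspec] at h2'
      rcases (Walk.mem_support_append_iff _ _).mp h2' with h | h
      · exact h
      · exact absurd h hz2
    have hlen1 : (p.takeUntil z1 h1).length + (p.dropUntil z1 h1).length = p.length := by
      have := congrArg Walk.length hspec
      rwa [Walk.length_append] at this
    have hlen2 : ((p.takeUntil z1 h1).takeUntil z2 hz2').length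
        + ((p.takeUntil z1 h1).dropUntil z2 hz2').length = (p.takeUntil z1 h1).length := by
      have := congrArg Walk.length ((p.takeUntil z1 h1).take_spec hz2')
      rwa [Walk.length_append] at this
    have hge2 : 2 ≤ ((p.takeUntil z1 h1).dropUntil z2 hz2').length := by
      rcases Nat.lt_or_ge ((p.takeUntil z1 h1).dropUntil z2 hz2').length 2 with hl | hl
      · exfalso
        interval_cases hcase : ((p.takeUntil z1 h1).dropUntil z2 hz2').length
        · exact hadj.ne (Walk.eq_of_length_eq_zero hcase).symm
        · refine hne (p.edges_takeUntil_subset h1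
            ((p.takeUntil z1 h1).edges_dropUntil_subset hz2' ?_))
          rw [Sym2.eq_swap]
          exact mem_edges_of_length_one hcase
      · exact hl
    refine ⟨((p.takeUntil z1 h1).takeUntil z2 hz2').append
      (Walk.cons hadj.symm (p.dropUntil z1 h1)), ?_, ?_⟩
    · rw [Walk.length_append, Walk.length_cons]
      omega
    · intro z hz
      rcases (Walk.mem_support_append_iff _ _).mp hz with h | h
      · exact p.support_takeUntil_subset h1
          ((p.takeUntil z1 h1).support_takeUntil_subset hz2' h)
      · rw [Walk.support_cons] at h
        rcases List.mem_cons.mp h with rfl | h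
        · exact p.support_takeUntil_subset h1 hz2'
        · exact p.support_dropUntil_subset h1 h

lemma exists_minimal_walk {x y : V} (Q : G.Walk x y → Prop) (hne : ∃ w, Q w) :
    ∃ w, Q w ∧ ∀ w', Q w' → w.length ≤ w'.length := by
  classical
  obtain ⟨w0, hw0⟩ := hne
  have hex : ∃ n, ∃ w : G.Walk x y, Q w ∧ w.length = n := ⟨w0.length, w0, hw0, rfl⟩
  obtain ⟨w, hw, hlen⟩ := Nat.find_spec hex
  refine ⟨w, hw, fun w' hw' => ?_⟩
  rw [hlen]
  exact Nat.find_min' hex ⟨w', hw', rfl⟩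

lemma rw_not_mem {S : Set V} {u z : V} (h : ReachWithin G Set.univ S u z) : z ∉ S := by
  obtain ⟨p, hp⟩ := h
  exact (hp z (Walk.end_mem_support p)).2

lemma rw_not_mem_start {S : Set V} {u z : V} (h : ReachWithin G Set.univ S u z) : u ∉ S := by
  obtain ⟨p, hp⟩ := h
  exact (hp u (Walk.start_mem_support p)).2

lemma rw_prefix {S : Set V} {u a : V} (p : G.Walk u a)
    (hp : ∀ z ∈ p.support, z ∈ Set.univ ∧ z ∉ S) {z : V} (hz : z ∈ p.support) :
    ReachWithin G Set.univ S u z := by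
  classical
  exact ⟨p.takeUntil z hz, fun x hx => hp x (p.support_takeUntil_subset hz hx)⟩

lemma rw_connect {S : Set V} {u a a' : V} (h : ReachWithin G Set.univ S u a)
    (h' : ReachWithin G Set.univ S u a') :
    ∃ w : G.Walk a a', ∀ z ∈ w.support, ReachWithin G Set.univ S u z := by
  classical
  obtain ⟨p, hp⟩ := h
  obtain ⟨p', hp'⟩ := h'
  refine ⟨p.reverse.append p', fun z hz => ?_⟩
  rcases (Walk.mem_support_append_iff _ _).mp hz with h | h
  · rw [Walk.support_reverse, List.mem_reverse] at h
    exact rw_prefix p hp h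
  · exact rw_prefix p' hp' h

lemma sep_reach_neighbor {S : Set V} {u w s : V} (hu : u ∉ S) (hs : s ∈ S)
    (p : G.Walk u w) (hp : ∀ z ∈ p.support, z ∉ S \ {s}) (hsp : s ∈ p.support) :
    ∃ a, G.Adj s a ∧ ReachWithin G Set.univ S u a := by
  classical
  have hcount := p.count_support_takeUntil_eq_one hsp
  have hqnil : ¬ (p.takeUntil s hsp).Nil := by
    intro h
    have : u = s := by
      have h0 := Walk.nil_iff_length_eq.mp h
      exact Walk.eq_of_length_eq_zero h0
    exact hu (this ▸ hs)
  have hqrnil : ¬ (p.takeUntil s hsp).reverse.Nil := by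
    rw [Walk.nil_iff_length_eq, Walk.length_reverse, ← Walk.nil_iff_length_eq]
    exact hqnil
  obtain ⟨a, hadj, r, hr⟩ := Walk.not_nil_iff.mp hqrnil
  have hsupr : (p.takeUntil s hsp).reverse.support = s :: r.support := by
    rw [hr, Walk.support_cons]
  have hsnotr : s ∉ r.support := by
    intro hmem
    have hc : List.count s ((p.takeUntil s hsp).support.reverse) = 1 := by
      rw [List.count_reverse]
      exact hcount
    rw [← Walk.support_reverse, hsupr] at hc
    simp only [List.count_cons_self] at hc
    have : List.count s r.support = 0 := by omega
    exact (List.count_eq_zero.mp this) hmem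
  refine ⟨a, hadj, r.reverse, fun z hz => ?_⟩
  rw [Walk.support_reverse, List.mem_reverse] at hz
  have hzq : z ∈ (p.takeUntil s hsp).support := by
    rw [← List.mem_reverse, ← Walk.support_reverse, hsupr]
    exact List.mem_cons_of_mem _ hz
  have hzs : z ≠ s := fun h => hsnotr (h ▸ hz)
  have hznot : z ∉ S \ {s} := hp z (p.support_takeUntil_subset hsp hzq)
  exact ⟨trivial, fun hzS => hznot ⟨hzS, hzs⟩⟩

lemma sep_symm {S : Set V} {u w : V} (h : SeparatesOn G Set.univ S u w) :
    SeparatesOn G Set.univ S w u := by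
  obtain ⟨h1, h2, h3, h4, h5, h6⟩ := h
  exact ⟨h2, h1, h4, h3, h5.symm, fun hr => h6 hr.symm'⟩

lemma sep_neighbors {S : Set V} {u w s : V} (hsep : SeparatesOn G Set.univ S u w)
    (hmin : ∀ S' ⊂ S, ¬ SeparatesOn G Set.univ S' u w) (hs : s ∈ S) :
    (∃ a, G.Adj s a ∧ ReachWithin G Set.univ S u a) ∧
    (∃ b, G.Adj s b ∧ ReachWithin G Set.univ S w b) := by
  obtain ⟨-, -, huS, hwS, huw, hnr⟩ := hsep
  have hss : S \ {s} ⊂ S := Set.sdiff_singleton_ssubset.mpr hs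
  have hrw : ReachWithin G Set.univ (S \ {s}) u w := by
    by_contra hcon
    exact hmin _ hss ⟨trivial, trivial, fun h => huS h.1, fun h => hwS h.1, huw, hcon⟩
  obtain ⟨p, hp⟩ := hrw
  have hp' : ∀ z ∈ p.support, z ∉ S \ {s} := fun z hz => (hp z hz).2
  have hsp : s ∈ p.support := by
    by_contra hcon
    refine hnr ⟨p, fun z hz => ⟨trivial, fun hzS => ?_⟩⟩
    rcases eq_or_ne z s with rfl | hzs
    · exact hcon hz
    · exact hp' z hz ⟨hzS, hzs⟩
  constructor
  · exact sep_reach_neighbor huS hs p hp' hsp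
  · refine sep_reach_neighbor hwS hs p.reverse ?_ ?_
    · intro z hz
      rw [Walk.support_reverse, List.mem_reverse] at hz
      exact hp' z hz
    · rw [Walk.support_reverse, List.mem_reverse]
      exact hsp

end Surgery
section SepClique

variable {G : SimpleGraph V}

/-- A shortest path between two nonadjacent vertices whose interior lies in a
reachability class. -/
lemma min_class_path {x y u' ax ay : V} (hxy : x ≠ y) (hnadj : ¬ G.Adj x y) {S : Set V}
    (haxadj : G.Adj x ax) (haxr : ReachWithin G Set.univ S u' ax)
    (hayadj : G.Adj y ay) (hayr : ReachWithin G Set.univ S u' ay) :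
    ∃ p : G.Walk x y, p.IsPath ∧
      (∀ z ∈ p.support, z = x ∨ z = y ∨ ReachWithin G Set.univ S u' z) ∧ 2 ≤ p.length ∧
      ∀ q : G.Walk x y, (∀ z ∈ q.support, z = x ∨ z = y ∨ ReachWithin G Set.univ S u' z) →
        p.length ≤ q.length := by
  classical
  obtain ⟨wA, hwA⟩ := rw_connect haxr hayr
  have hQA : ∃ q : G.Walk x y, ∀ z ∈ q.support, z = x ∨ z = y ∨
      ReachWithin G Set.univ S u' z := by
    refine ⟨Walk.cons haxadj (wA.append (Walk.cons hayadj.symm Walk.nil)), ?_⟩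
    intro z hz
    rw [Walk.support_cons] at hz
    rcases List.mem_cons.mp hz with rfl | hz
    · exact Or.inl rfl
    rcases (Walk.mem_support_append_iff _ _).mp hz with h | h
    · exact Or.inr (Or.inr (hwA z h))
    · rw [Walk.support_cons] at h
      rcases List.mem_cons.mp h with rfl | h
      · exact Or.inr (Or.inr hayr)
      · rw [Walk.support_nil] at h
        exact Or.inr (Or.inl (List.mem_singleton.mp h))
  obtain ⟨wA0, hwA0, hwA0min⟩ := exists_minimal_walk _ hQA
  refine ⟨wA0.bypass, wA0.bypass_isPath,
    fun z hz => hwA0 z (wA0.support_bypass_subset hz), ?_,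
    fun q hq => le_trans wA0.length_bypass_le (hwA0min q hq)⟩
  rcases Nat.lt_or_ge wA0.bypass.length 2 with hl | hl
  · exfalso
    interval_cases h : wA0.bypass.length
    · exact hxy (Walk.eq_of_length_eq_zero h)
    · exact hnadj (Walk.adj_of_length_eq_one h)
  · exact hl

lemma minSep_isClique (hch : IsChordal G) {S : Set V} (hS : IsMinSeparator G S) :
    G.IsClique S := by
  classical
  obtain ⟨-, u, w, hsep, hmin⟩ := hS
  have hsep2 := hsep
  obtain ⟨-, -, huS, hwS, huw, hnr⟩ := hsep2
  intro x hx y hy hxy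
  by_contra hnadj
  have hcross : ∀ z, ReachWithin G Set.univ S u z → ReachWithin G Set.univ S w z → False :=
    fun z h1 h2 => hnr (h1.trans' h2.symm')
  have hRUx : ¬ ReachWithin G Set.univ S u x := fun h => rw_not_mem h hx
  have hRUy : ¬ ReachWithin G Set.univ S u y := fun h => rw_not_mem h hy
  have hRWx : ¬ ReachWithin G Set.univ S w x := fun h => rw_not_mem h hx
  have hRWy : ¬ ReachWithin G Set.univ S w y := fun h => rw_not_mem h hy
  obtain ⟨⟨ax, haxadj, haxr⟩, ⟨bx, hbxadj, hbxr⟩⟩ := sep_neighbors hsep hmin hx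
  obtain ⟨⟨ay, hayadj, hayr⟩, ⟨by', hbyadj, hbyr⟩⟩ := sep_neighbors hsep hmin hy
  obtain ⟨pA, hpApath, hpAclass, hpAlen, hpAmin⟩ :=
    min_class_path hxy hnadj (haxadj.symm).symm haxr (hayadj.symm).symm hayr
  obtain ⟨pB, hpBpath, hpBclass, hpBlen, hpBmin⟩ :=
    min_class_path hxy hnadj (hbxadj.symm).symm hbxr (hbyadj.symm).symm hbyr
  have hboth : ∀ z, z ∈ pA.support → z ∈ pB.support → z = x ∨ z = y := by
    intro z hzA hzB
    rcases hpAclass z hzA with rfl | rfl | hA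
    · exact Or.inl rfl
    · exact Or.inr rfl
    rcases hpBclass z hzB with rfl | rfl | hB
    · exact absurd hA hRUx
    · exact absurd hA hRUy
    · exact absurd (hcross z hA hB) (fun h => h)
  set c := pA.append pB.reverse with hc
  have hclen : c.length = pA.length + pB.length := by
    rw [hc, Walk.length_append, Walk.length_reverse]
  have hlen4 : 4 ≤ c.length := by omega
  have hcycle : c.IsCycle := by
    rw [Walk.isCycle_def]
    refine ⟨?_, ?_, ?_⟩
    · -- trail
      rw [Walk.isTrail_def, hc, Walk.edges_append, Walk.edges_reverse]
      rw [List.nodup_append]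
      refine ⟨hpApath.isTrail.edges_nodup, List.nodup_reverse.mpr hpBpath.isTrail.edges_nodup, ?_⟩
      intro e he1 e' he2 hee
      subst hee
      rw [List.mem_reverse] at he2
      induction e using Sym2.ind with
      | _ z1 z2 =>
        have hadj := pA.adj_of_mem_edges he1
        have h1A := pA.fst_mem_support_of_mem_edges he1
        have h2A := pA.snd_mem_support_of_mem_edges he1
        have h1B := pB.fst_mem_support_of_mem_edges he2
        have h2B := pB.snd_mem_support_of_mem_edges he2
        rcases hboth z1 h1A h1B with rfl | rfl <;> rcases hboth z2 h2A h2B with rfl | rfl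
        · exact hadj.ne rfl
        · exact hnadj hadj
        · exact hnadj hadj.symm
        · exact hadj.ne rfl
    · -- nonempty
      intro h
      have := congrArg Walk.length h
      rw [Walk.length_nil] at this
      omega
    · -- support tail nodup
      have htail : c.support.tail = pA.support.tail ++ pB.reverse.support.tail := by
        rw [hc, Walk.support_append, Walk.support_eq_cons pA, List.cons_append, List.tail_cons, List.tail_cons]
      rw [htail, List.nodup_append]
      have hnA := (Walk.isPath_def pA).mp hpApath
      rw [Walk.support_eq_cons pA, List.nodup_cons] at hnA
      have hpBr : pB.reverse.IsPath := hpBpath.reverse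
      have hnB := (Walk.isPath_def pB.reverse).mp hpBr
      rw [Walk.support_eq_cons pB.reverse, List.nodup_cons] at hnB
      refine ⟨hnA.2, hnB.2, ?_⟩
      intro z hzA z' hzB hzz
      subst hzz
      have hzA' : z ∈ pA.support := by
        rw [Walk.support_eq_cons pA]
        exact List.mem_cons_of_mem _ hzA
      have hzB'' : z ∈ pB.reverse.support := by
        rw [Walk.support_eq_cons pB.reverse]
        exact List.mem_cons_of_mem _ hzB
      have hzB' : z ∈ pB.support := by
        rw [Walk.support_reverse, List.mem_reverse] at hzB''
        exact hzB''
      have hznx : z ≠ x := fun h => hnA.1 (h ▸ hzA)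
      have hzny : z ≠ y := fun h => hnB.1 (h ▸ hzB)
      rcases hboth z hzA' hzB' with rfl | rfl
      · exact hznx rfl
      · exact hzny rfl
  obtain ⟨z1, z2, hz1, hz2, hadj, hne⟩ := hch c hcycle hlen4
  have hmemc : ∀ z, z ∈ c.support → z ∈ pA.support ∨ z ∈ pB.support := by
    intro z hz
    rcases (Walk.mem_support_append_iff _ _).mp hz with h | h
    · exact Or.inl h
    · rw [Walk.support_reverse, List.mem_reverse] at h
      exact Or.inr h
  have hneA : s(z1, z2) ∉ pA.edges := by
    intro hm
    refine hne ?_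
    rw [hc, Walk.edges_append]
    exact List.mem_append_left _ hm
  have hneB : s(z1, z2) ∉ pB.edges := by
    intro hm
    refine hne ?_
    rw [hc, Walk.edges_append]
    refine List.mem_append_right _ ?_
    rw [Walk.edges_reverse, List.mem_reverse]
    exact hm
  have caseA : z1 ∈ pA.support → z2 ∈ pA.support → False := by
    intro h1 h2
    obtain ⟨q, hql, hqs⟩ := shortcut pA h1 h2 hadj hneA
    exact absurd (hpAmin q (fun z hz => hpAclass z (hqs z hz))) (not_le.mpr hql)
  have caseB : z1 ∈ pB.support → z2 ∈ pB.support → False := by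
    intro h1 h2
    obtain ⟨q, hql, hqs⟩ := shortcut pB h1 h2 hadj hneB
    exact absurd (hpBmin q (fun z hz => hpBclass z (hqs z hz))) (not_le.mpr hql)
  have hclassA : ∀ z, z ∈ pA.support → z ∉ pB.support → ReachWithin G Set.univ S u z := by
    intro z hzA hzB
    rcases hpAclass z hzA with rfl | rfl | h
    · exact absurd pB.start_mem_support hzB
    · exact absurd pB.end_mem_support hzB
    · exact h
  have hclassB : ∀ z, z ∈ pB.support → z ∉ pA.support → ReachWithin G Set.univ S w z := by
    intro z hzB hzA
    rcases hpBclass z hzB with rfl | rfl | h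
    · exact absurd pA.start_mem_support hzA
    · exact absurd pA.end_mem_support hzA
    · exact h
  have hmixed : ∀ z1' z2', G.Adj z1' z2' → ReachWithin G Set.univ S u z1' →
      ReachWithin G Set.univ S w z2' → False := by
    intro z1' z2' hadj' h1 h2
    exact hcross z2' (h1.trans' (ReachWithin.of_adj hadj' (rw_not_mem h1) (rw_not_mem h2)))
      h2
  rcases hmemc z1 hz1 with h1A | h1B <;> rcases hmemc z2 hz2 with h2A | h2B
  · exact caseA h1A h2A
  · by_cases h1B : z1 ∈ pB.support
    · exact caseB h1B h2B
    · by_cases h2A : z2 ∈ pA.support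
      · exact caseA h1A h2A
      · exact hmixed z1 z2 hadj (hclassA z1 h1A h1B) (hclassB z2 h2B h2A)
  · by_cases h2B : z2 ∈ pB.support
    · exact caseB h1B h2B
    · by_cases h1A : z1 ∈ pA.support
      · exact caseA h1A h2A
      · exact hmixed z2 z1 hadj.symm (hclassA z2 h2A h2B) (hclassB z1 h1B h1A)
  · exact caseB h1B h2B

end SepClique
section Induce

variable {G : SimpleGraph V}

lemma chordal_induce (hch : IsChordal G) (s : Set V) : IsChordal (G.induce s) := by
  intro u c hc hlen
  have hinj : Function.Injective (SimpleGraph.Embedding.induce (G := G) s).toHom :=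
    (SimpleGraph.Embedding.induce (G := G) s).injective
  have hc' : (c.map _).IsCycle := hc.map hinj
  have hlen' : 4 ≤ (c.map (SimpleGraph.Embedding.induce (G := G) s).toHom).length := by
    rwa [Walk.length_map]
  obtain ⟨a, b, ha, hb, hadj, hne⟩ := hch _ hc' hlen'
  rw [Walk.support_map] at ha hb
  obtain ⟨a₀, ha₀, rfl⟩ := List.mem_map.mp ha
  obtain ⟨b₀, hb₀, rfl⟩ := List.mem_map.mp hb
  refine ⟨a₀, b₀, ha₀, hb₀, hadj, ?_⟩
  intro hmem
  apply hne
  rw [Walk.edges_map]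
  have := List.mem_map_of_mem (f := Sym2.map (SimpleGraph.Embedding.induce (G := G) s).toHom) hmem
  simpa using this

lemma walk_induce {s : Set V} : ∀ {a b : V} (w : G.Walk a b)
    (_ : ∀ x ∈ w.support, x ∈ s) (ha : a ∈ s) (hb : b ∈ s),
    (G.induce s).Reachable ⟨a, ha⟩ ⟨b, hb⟩ := by
  intro a b w
  induction w with
  | nil =>
    intro _ ha hb
    exact Reachable.refl _
  | @cons a c b h p ih =>
    intro hw ha hb
    have hc : c ∈ s := hw c (by simp [Walk.support_cons])
    have hadj : (G.induce s).Adj ⟨a, ha⟩ ⟨c, hc⟩ := h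
    exact hadj.reachable.trans (ih (fun x hx => hw x (by simp [Walk.support_cons, hx])) hc hb)

lemma simplicial_of_induce {W : Set V} {a : V} (ha : a ∈ W)
    (hnb : ∀ z, G.Adj a z → z ∈ W)
    (hs : IsSimplicial (G.induce W) ⟨a, ha⟩) : IsSimplicial G a := by
  intro t1 ht1 t2 ht2 hne
  have h1 : (G.induce W).Adj ⟨a, ha⟩ ⟨t1, hnb _ ht1⟩ := ht1
  have h2 : (G.induce W).Adj ⟨a, ha⟩ ⟨t2, hnb _ ht2⟩ := ht2
  have hne' : (⟨t1, hnb _ ht1⟩ : W) ≠ ⟨t2, hnb _ ht2⟩ :=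
    fun h => hne (congrArg Subtype.val h)
  exact hs h1 h2 hne'

lemma simplicial_of_complete (hc : CompleteOn G Set.univ) (v : V) : IsSimplicial G v :=
  fun _ ht1 _ ht2 hne => hc _ trivial _ trivial hne

lemma exists_minSep {u w : V} (hne : u ≠ w) (hnadj : ¬ G.Adj u w) :
    ∃ S, SeparatesOn G Set.univ S u w ∧ ∀ S' ⊂ S, ¬ SeparatesOn G Set.univ S' u w := by
  have h0 : SeparatesOn G Set.univ (Set.univ \ {u, w}) u w := by
    refine ⟨trivial, trivial, by simp, by simp, hne, ?_⟩
    rintro ⟨p, hp⟩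
    cases p with
    | nil => exact hne rfl
    | cons h q =>
      rename_i z
      have hz : z ∈ Set.univ ∧ z ∉ Set.univ \ {u, w} := hp z (by simp [Walk.support_cons])
      have hz' : z = u ∨ z = w := by
        have := hz.2
        simp only [Set.mem_diff, Set.mem_univ, true_and, not_not] at this
        simpa using this
      rcases hz' with rfl | rfl
      · exact h.ne rfl
      · exact hnadj h
  obtain ⟨S, hS, hminS⟩ := Set.Finite.exists_maximalFor
    (OrderDual.toDual : Set V → (Set V)ᵒᵈ)
    {X : Set V | SeparatesOn G Set.univ X u w} (Set.toFinite _) ⟨_, h0⟩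
  refine ⟨S, hS, fun S' hS' hsepS' => ?_⟩
  have := hminS hsepS' hS'.subset
  exact hS'.not_subset (show S ⊆ S' from this)

/-- Dirac's theorem: a chordal graph is complete or has two nonadjacent simplicial
vertices. -/
lemma dirac_aux : ∀ (n : ℕ) {V' : Type u_1} [Fintype V'] (G' : SimpleGraph V'),
    Nat.card V' ≤ n → IsChordal G' →
    CompleteOn G' Set.univ ∨ ∃ a b : V', a ≠ b ∧ ¬ G'.Adj a b ∧
      IsSimplicial G' a ∧ IsSimplicial G' b := by
  intro n
  induction n with
  | zero =>
    intro V' _ G' hcard _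
    left
    intro a _ b _ hne
    rw [Nat.card_eq_fintype_card, Nat.le_zero] at hcard
    exact ((Fintype.card_eq_zero_iff.mp hcard).false a).elim
  | succ n ih =>
    intro V' instF G' hcard hch'
    by_cases hcomp : CompleteOn G' Set.univ
    · exact Or.inl hcomp
    · right
      rw [CompleteOn] at hcomp
      push_neg at hcomp
      obtain ⟨u, -, w, -, huw, hnadj⟩ := hcomp
      obtain ⟨S, hsep, hmin⟩ := exists_minSep huw hnadj
      have hSmin : IsMinSeparator G' S := ⟨Set.subset_univ _, u, w, hsep, hmin⟩
      have hSclique : G'.IsClique S := minSep_isClique hch' hSmin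
      have hside : ∀ (u' w' : V'), SeparatesOn G' Set.univ S u' w' →
          (∀ S' ⊂ S, ¬ SeparatesOn G' Set.univ S' u' w') →
          ∃ a, ReachWithin G' Set.univ S u' a ∧ IsSimplicial G' a := by
        intro u' w' hsep' hmin'
        obtain ⟨-, -, hu'S, hw'S, hu'w', hnr'⟩ := hsep'
        set W : Set V' := {z | ReachWithin G' Set.univ S u' z} ∪ S with hW
        have hu'W : u' ∈ W := Or.inl (ReachWithin.rfl' hu'S)
        have hw'W : w' ∉ W := by
          rintro (h | h)
          · exact hnr' h
          · exact hw'S h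
        have hclosure : ∀ a, a ∈ {z | ReachWithin G' Set.univ S u' z} →
            ∀ z, G'.Adj a z → z ∈ W := by
          intro a haRW z hadj
          by_cases hzS : z ∈ S
          · exact Or.inr hzS
          · exact Or.inl (haRW.trans' (ReachWithin.of_adj hadj (rw_not_mem haRW) hzS))
        have hcard' : Nat.card ↥W ≤ n := by
          have h1 : Nat.card ↥W = W.ncard := (Nat.card_coe_set_eq W).symm
          have h2 : W.ncard < (Set.univ : Set V').ncard := by
            refine Set.ncard_lt_ncard ?_ Set.finite_univ
            rw [Set.ssubset_univ_iff]
            intro h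
            exact hw'W (h ▸ Set.mem_univ w')
          rw [Set.ncard_univ] at h2
          omega
        haveI : Fintype ↥W := Fintype.ofFinite _
        rcases ih (G'.induce W) hcard' (chordal_induce hch' W) with hcompW | hsimpW
        · refine ⟨u', ReachWithin.rfl' hu'S, ?_⟩
          refine simplicial_of_induce hu'W (hclosure u' (ReachWithin.rfl' hu'S)) ?_
          exact simplicial_of_complete hcompW _
        · obtain ⟨x, y, hxy, hnadjxy, hsx, hsy⟩ := hsimpW
          have hnotboth : ¬ (x.val ∈ S ∧ y.val ∈ S) := by
            rintro ⟨h1, h2⟩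
            have : G'.Adj x.val y.val :=
              hSclique h1 h2 (fun h => hxy (Subtype.ext h))
            exact hnadjxy this
          rcases not_and_or.mp hnotboth with hxS | hyS
          · have hxRW : ReachWithin G' Set.univ S u' x.val := by
              rcases x.2 with h | h
              · exact h
              · exact absurd h hxS
            refine ⟨x.val, hxRW, ?_⟩
            exact simplicial_of_induce x.2 (hclosure x.val hxRW) hsx
          · have hyRW : ReachWithin G' Set.univ S u' y.val := by
              rcases y.2 with h | h
              · exact h
              · exact absurd h hyS
            refine ⟨y.val, hyRW, ?_⟩
            exact simplicial_of_induce y.2 (hclosure y.val hyRW) hsy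
      obtain ⟨a, haR, hsa⟩ := hside u w hsep hmin
      obtain ⟨b, hbR, hsb⟩ := hside w u (sep_symm hsep)
        (fun S' hS' hc => hmin S' hS' (sep_symm hc))
      obtain ⟨-, -, -, -, -, hnr⟩ := hsep
      refine ⟨a, b, ?_, ?_, hsa, hsb⟩
      · rintro rfl
        exact hnr (haR.trans' hbR.symm')
      · intro hadj
        exact hnr ((haR.trans'
          (ReachWithin.of_adj hadj (rw_not_mem haR) (rw_not_mem hbR))).trans' hbR.symm')

lemma exists_simplicial (hch : IsChordal G) [Nonempty V] : ∃ v : V, IsSimplicial G v := by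
  rcases dirac_aux (Nat.card V) G le_rfl hch with hcomp | ⟨a, -, -, -, hsa, -⟩
  · exact ⟨Classical.arbitrary V, simplicial_of_complete hcomp _⟩
  · exact ⟨a, hsa⟩

end Induce
section Existence

variable {G : SimpleGraph V}

lemma closedNbhd_maxClique {v : V} (hv : IsSimplicial G v) :
    IsMaxClique G (closedNbhd G v) := by
  constructor
  · intro a ha b hb hab
    rcases Set.mem_insert_iff.mp ha with rfl | ha
    · rcases Set.mem_insert_iff.mp hb with rfl | hb
      · exact absurd rfl hab
      · exact hb
    · rcases Set.mem_insert_iff.mp hb with rfl | hb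
      · exact (ha : G.Adj b a).symm
      · exact hv ha hb hab
  · intro t ht hsub
    refine Set.Subset.antisymm hsub ?_
    intro z hz
    rcases eq_or_ne z v with rfl | hzv
    · exact Set.mem_insert _ _
    · exact Set.mem_insert_of_mem _
        ((ht (hsub (Set.mem_insert _ _)) hz hzv.symm : G.Adj v z) : z ∈ G.neighborSet v)

lemma maxClique_of_mem_v {v : V} (hv : IsSimplicial G v) {D : Set V} (hD : IsMaxClique G D)
    (hvD : v ∈ D) : D = closedNbhd G v := by
  have hsub : D ⊆ closedNbhd G v := by
    intro z hz
    rcases eq_or_ne z v with rfl | hzv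
    · exact Set.mem_insert _ _
    · exact Set.mem_insert_of_mem _ ((hD.1 hvD hz hzv.symm : G.Adj v z) : z ∈ G.neighborSet v)
  exact hD.2 _ (closedNbhd_maxClique hv).1 hsub

lemma walk_avoid {v : V} (hv : IsSimplicial G v) :
    ∀ (n : ℕ) {x y : V}, x ≠ v → y ≠ v → ∀ (w : G.Walk x y), w.length ≤ n →
      ∃ q : G.Walk x y, v ∉ q.support := by
  classical
  intro n
  induction n with
  | zero =>
    intro x y hx hy w hw
    refine ⟨w, fun hmem => ?_⟩
    rw [Nat.le_zero] at hw
    cases w with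
    | nil =>
      have hvx : v = x := by simpa using hmem
      exact hx hvx.symm
    | cons h q => simp [Walk.length_cons] at hw
  | succ n ih =>
    intro x y hx hy w hw
    by_cases hmem : v ∈ w.support
    · have hlensum : (w.takeUntil v hmem).length + (w.dropUntil v hmem).length = w.length := by
        have := congrArg Walk.length (w.take_spec hmem)
        rwa [Walk.length_append] at this
      have htnil : ¬ (w.takeUntil v hmem).reverse.Nil := by
        rw [Walk.nil_iff_length_eq, Walk.length_reverse]
        intro h0
        exact hx (Walk.eq_of_length_eq_zero h0)
      obtain ⟨a, hva, r, hr⟩ := Walk.not_nil_iff.mp htnil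
      have hdnil : ¬ (w.dropUntil v hmem).Nil := by
        rw [Walk.nil_iff_length_eq]
        intro h0
        exact hy (Walk.eq_of_length_eq_zero h0).symm
      obtain ⟨b, hvb, d2, hd2⟩ := Walk.not_nil_iff.mp hdnil
      have hlr : (w.takeUntil v hmem).length = r.length + 1 := by
        have := congrArg Walk.length hr
        rw [Walk.length_reverse, Walk.length_cons] at this
        omega
      have hld : (w.dropUntil v hmem).length = d2.length + 1 := by
        have := congrArg Walk.length hd2
        rw [Walk.length_cons] at this
        omega
      rcases eq_or_ne a b with rfl | hab
      · refine ih hx hy (r.reverse.append d2) ?_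
        rw [Walk.length_append, Walk.length_reverse]
        omega
      · have hadj : G.Adj a b := hv hva hvb hab
        refine ih hx hy (r.reverse.append (Walk.cons hadj d2)) ?_
        rw [Walk.length_append, Walk.length_reverse, Walk.length_cons]
        omega
    · exact ⟨w, hmem⟩

lemma isClique_induce_iff {W : Set V} {t : Set ↥W} :
    (G.induce W).IsClique t ↔ G.IsClique (Subtype.val '' t) := by
  constructor
  · rintro h a ⟨a₀, ha₀, rfl⟩ b ⟨b₀, hb₀, rfl⟩ hab
    exact h ha₀ hb₀ (fun hh => hab (congrArg _ hh))
  · intro h a ha b hb hab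
    exact h ⟨a, ha, rfl⟩ ⟨b, hb, rfl⟩ (fun hh => hab (Subtype.ext hh))

lemma img_res_eq {v : V} {D : Set V} (hvD : v ∉ D) :
    Subtype.val '' ((Subtype.val ⁻¹' D) : Set ↥({v}ᶜ : Set V)) = D := by
  ext z
  simp only [Set.mem_image, Set.mem_preimage, Subtype.exists, exists_and_right,
    exists_eq_right]
  constructor
  · rintro ⟨hz, hzD⟩
    exact hzD
  · intro hz
    exact ⟨fun h => hvD ((Set.mem_singleton_iff.mp h) ▸ hz), hz⟩

lemma res_maxClique {v : V} {D : Set V} (hD : IsMaxClique G D) (hvD : v ∉ D) :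
    IsMaxClique (G.induce ({v}ᶜ : Set V)) (Subtype.val ⁻¹' D) := by
  constructor
  · rw [isClique_induce_iff]
    exact hD.1.subset (by rw [img_res_eq hvD])
  · intro t ht hsub
    have htD : D ⊆ Subtype.val '' t := by
      intro d hd
      have hdv : (d : V) ≠ v := fun h => hvD (h ▸ hd)
      exact ⟨⟨d, hdv⟩, hsub hd, rfl⟩
    have himgD : D = Subtype.val '' t := hD.2 _ (isClique_induce_iff.mp ht) htD
    refine Set.Subset.antisymm hsub ?_
    intro x hx
    show (x : V) ∈ D
    rw [himgD]
    exact ⟨x, hx, rfl⟩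

end Existence
section LiftLemmas

variable {G : SimpleGraph V}

lemma img_res_diff {v : V} (D : Set V) :
    Subtype.val '' ((Subtype.val ⁻¹' D) : Set ↥({v}ᶜ : Set V)) = D \ {v} := by
  rw [Subtype.image_preimage_coe, Set.diff_eq_compl_inter]

lemma res_C_maxClique {v : V} (hv : IsSimplicial G v)
    (hcase : ¬ ∃ D : Set V, IsMaxClique G D ∧ D ≠ closedNbhd G v ∧ closedNbhd G v \ {v} ⊆ D) :
    IsMaxClique (G.induce ({v}ᶜ : Set V)) (Subtype.val ⁻¹' (closedNbhd G v)) := by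
  have hC := closedNbhd_maxClique hv
  constructor
  · rw [isClique_induce_iff, img_res_diff]
    exact hC.1.subset Set.diff_subset
  · intro t ht hsub
    have himg : closedNbhd G v \ {v} ⊆ Subtype.val '' t := by
      intro d hd
      have hdv : d ≠ v := hd.2
      exact ⟨⟨d, hdv⟩, hsub (show ((⟨d, hdv⟩ : ↥({v}ᶜ : Set V)) : V) ∈ closedNbhd G v from hd.1),
        rfl⟩
    obtain ⟨D, hD, hsubD⟩ := exists_maxClique_superset (isClique_induce_iff.mp ht)
    by_cases hDC : D = closedNbhd G v
    · refine Set.Subset.antisymm hsub ?_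
      intro x hx
      show (x : V) ∈ closedNbhd G v
      rw [← hDC]
      exact hsubD ⟨x, hx, rfl⟩
    · exact absurd ⟨D, hD, hDC, himg.trans hsubD⟩ hcase

lemma img_cases {v : V} (hv : IsSimplicial G v) (s : MCl (G.induce ({v}ᶜ : Set V))) :
    (IsMaxClique G (Subtype.val '' s.val) ∧ Subtype.val '' s.val ≠ closedNbhd G v) ∨
      Subtype.val '' s.val = closedNbhd G v \ {v} := by
  have hclique : G.IsClique (Subtype.val '' s.val) := isClique_induce_iff.mp s.2.1
  obtain ⟨D, hD, hsub⟩ := exists_maxClique_superset hclique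
  have hvimg : v ∉ Subtype.val '' s.val := by
    rintro ⟨⟨z, hz⟩, -, h⟩
    exact hz (by simp only [Set.mem_singleton_iff]; exact h)
  by_cases hDC : D = closedNbhd G v
  · right
    have hvC : v ∉ closedNbhd G v \ {v} := fun h => h.2 rfl
    have h1 : Subtype.val '' s.val ⊆ closedNbhd G v \ {v} :=
      fun z hz => ⟨hDC ▸ hsub hz, fun h => hvimg (h ▸ hz)⟩
    have hres : s.val = Subtype.val ⁻¹' (closedNbhd G v \ {v}) := by
      apply s.2.2
      · rw [isClique_induce_iff, img_res_eq hvC]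
        exact (closedNbhd_maxClique hv).1.subset Set.diff_subset
      · intro x hx
        exact h1 ⟨x, hx, rfl⟩
    rw [hres, img_res_eq hvC]
  · left
    have hvD : v ∉ D := fun h => hDC (maxClique_of_mem_v hv hD h)
    have hres : s.val = Subtype.val ⁻¹' D :=
      s.2.2 _ (res_maxClique hD hvD).1 (fun x hx => hsub ⟨x, hx, rfl⟩)
    rw [hres, img_res_eq hvD]
    exact ⟨hD, hDC⟩

lemma lift_case2 {v : V} (hv : IsSimplicial G v)
    (hcase : ¬ ∃ D : Set V, IsMaxClique G D ∧ D ≠ closedNbhd G v ∧ closedNbhd G v \ {v} ⊆ D)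
    {T' : SimpleGraph (MCl (G.induce ({v}ᶜ : Set V)))}
    (hT' : IsCliqueTree (G.induce ({v}ᶜ : Set V)) T') :
    ∃ T : SimpleGraph (MCl G), IsCliqueTree G T := by
  classical
  set C := closedNbhd G v with hCdef
  have hC : IsMaxClique G C := closedNbhd_maxClique hv
  -- the map down on cliques
  have hm : ∀ X : MCl G, IsMaxClique (G.induce ({v}ᶜ : Set V)) (Subtype.val ⁻¹' X.val) := by
    intro X
    by_cases hXC : X.val = C
    · rw [hXC]
      exact res_C_maxClique hv hcase
    · exact res_maxClique X.2 (fun h => hXC (maxClique_of_mem_v hv X.2 h))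
  set m : MCl G → MCl (G.induce ({v}ᶜ : Set V)) := fun X => ⟨_, hm X⟩ with hmdef
  have hinj : Function.Injective m := by
    intro X Y hXY
    have h1 : Subtype.val ⁻¹' X.val = Subtype.val ⁻¹' Y.val := congrArg Subtype.val hXY
    have h2 : X.val \ {v} = Y.val \ {v} := by
      rw [← img_res_diff (v := v) X.val, ← img_res_diff (v := v) Y.val, h1]
    by_cases hX : X.val = C <;> by_cases hY : Y.val = C
    · exact Subtype.ext (hX.trans hY.symm)
    · exfalso
      have hvY : v ∉ Y.val := fun h => hY (maxClique_of_mem_v hv Y.2 h)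
      have : C \ {v} ⊆ Y.val := by
        rw [← hX, h2]
        exact Set.diff_subset
      exact hcase ⟨Y.val, Y.2, hY, this⟩
    · exfalso
      have hvX : v ∉ X.val := fun h => hX (maxClique_of_mem_v hv X.2 h)
      have : C \ {v} ⊆ X.val := by
        rw [← hY, ← h2]
        exact Set.diff_subset
      exact hcase ⟨X.val, X.2, hX, this⟩
    · have hvX : v ∉ X.val := fun h => hX (maxClique_of_mem_v hv X.2 h)
      have hvY : v ∉ Y.val := fun h => hY (maxClique_of_mem_v hv Y.2 h)
      refine Subtype.ext ?_
      rw [← Set.diff_singleton_eq_self hvX, ← Set.diff_singleton_eq_self hvY]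
      exact h2
  have hsurj : Function.Surjective m := by
    intro s
    rcases img_cases hv s with ⟨hmax, hne⟩ | heq
    · refine ⟨⟨_, hmax⟩, ?_⟩
      refine Subtype.ext ?_
      show Subtype.val ⁻¹' (Subtype.val '' s.val) = s.val
      exact Set.preimage_image_eq _ Subtype.val_injective
    · refine ⟨⟨C, hC⟩, ?_⟩
      refine Subtype.ext ?_
      show Subtype.val ⁻¹' C = s.val
      have : s.val = Subtype.val ⁻¹' (Subtype.val '' s.val) :=
        (Set.preimage_image_eq _ Subtype.val_injective).symm
      rw [this, heq]
      ext x
      simp only [Set.mem_preimage, Set.mem_diff, Set.mem_singleton_iff]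
      exact ⟨fun h => ⟨h, x.2⟩, fun h => h.1⟩
  set e := Equiv.ofBijective m ⟨hinj, hsurj⟩ with hedef
  have hme : ∀ s, m (e.symm s) = s := fun s => e.apply_symm_apply s
  have hem : ∀ X, e.symm (m X) = X := fun X => e.symm_apply_apply X
  -- the tree
  refine ⟨SimpleGraph.mk (fun X Y => T'.Adj (m X) (m Y))
    ⟨fun X Y h => h.symm⟩ ⟨fun X h => T'.loopless.irrefl _ h⟩, ?_⟩
  set T : SimpleGraph (MCl G) :=
    SimpleGraph.mk (fun X Y => T'.Adj (m X) (m Y)) ⟨fun X Y h => h.symm⟩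
      ⟨fun X h => T'.loopless.irrefl _ h⟩ with hTdef
  show IsCliqueTree G T
  have hTadj : ∀ {X Y}, T.Adj X Y ↔ T'.Adj (m X) (m Y) := Iff.rfl
  -- walk transfers
  have walkup : ∀ {s t : MCl (G.induce ({v}ᶜ : Set V))} (w : T'.Walk s t),
      ∃ p : T.Walk (e.symm s) (e.symm t), ∀ Z ∈ p.support, ∃ s₀ ∈ w.support, Z = e.symm s₀ := by
    intro s t w
    induction w with
    | nil =>
      refine ⟨Walk.nil, fun Z hZ => ?_⟩
      rw [Walk.support_nil, List.mem_singleton] at hZ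
      exact ⟨_, by simp, hZ⟩
    | @cons s₁ s₂ t₁ h q ih =>
      obtain ⟨p, hp⟩ := ih
      have hadj : T.Adj (e.symm s₁) (e.symm s₂) := by
        rw [hTadj, hme, hme]
        exact h
      refine ⟨Walk.cons hadj p, ?_⟩
      intro Z hZ
      rw [Walk.support_cons] at hZ
      rcases List.mem_cons.mp hZ with rfl | hZ
      · exact ⟨s₁, by simp [Walk.support_cons], rfl⟩
      · obtain ⟨s₀, hs₀, rfl⟩ := hp Z hZ
        exact ⟨s₀, by simp [Walk.support_cons, hs₀], rfl⟩
  have walkdown : ∀ {X Y : MCl G} (w : T.Walk X Y),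
      ∃ w' : T'.Walk (m X) (m Y), w'.support.map e.symm = w.support ∧
        w'.edges.map (Sym2.map e.symm) = w.edges := by
    intro X Y w
    induction w with
    | nil => exact ⟨Walk.nil, by simp [hem], by simp⟩
    | @cons X₁ X₂ Y₁ h q ih =>
      obtain ⟨w', hs, he'⟩ := ih
      refine ⟨Walk.cons (hTadj.mp h) w', ?_, ?_⟩
      · rw [Walk.support_cons, Walk.support_cons, List.map_cons, hs, hem]
      · rw [Walk.edges_cons, Walk.edges_cons, List.map_cons, he', Sym2.map_pair_eq, hem, hem]
  -- tree
  have htree : T.IsTree := by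
    constructor
    · haveI : Nonempty (MCl G) := ⟨⟨C, hC⟩⟩
      refine ⟨fun X Y => ?_⟩
      obtain ⟨w⟩ := hT'.1.1.preconnected (m X) (m Y)
      obtain ⟨p, -⟩ := walkup w
      exact ⟨p.copy (hem X) (hem Y)⟩
    · intro X c hc
      obtain ⟨c', hs, he'⟩ := walkdown c
      have hc' : c'.IsCycle := by
        rw [Walk.isCycle_def]
        refine ⟨?_, ?_, ?_⟩
        · rw [Walk.isTrail_def]
          exact List.Nodup.of_map _ (he' ▸ hc.isTrail.edges_nodup)
        · intro h0
          have h1 := congrArg (fun (l : List (MCl G)) => l.length) hs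
          simp only [List.length_map] at h1
          rw [h0] at h1
          simp only [Walk.support_nil, List.length_cons, List.length_nil] at h1
          have h2 : c.support.length = c.length + 1 := c.length_support
          have h3 : 0 < c.length := by
            rcases Nat.eq_zero_or_pos c.length with h | h
            · exact absurd (Walk.nil_iff_length_eq.mpr h) hc.not_nil
            · exact h
          omega
        · have htl : c.support.tail = c'.support.tail.map e.symm := by
            rw [← hs]
            cases c'.support <;> simp
          exact List.Nodup.of_map _ (htl ▸ hc.2)
      exact hT'.1.2 c' hc'
  -- junction
  refine junction_of_jp htree ?_
  intro x X Y hxX hxY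
  by_cases hxv : x = v
  · subst hxv
    have hXC : X.val = C := maxClique_of_mem_v hv X.2 hxX
    have hYC : Y.val = C := maxClique_of_mem_v hv Y.2 hxY
    have hXY : X = Y := Subtype.ext (hXC.trans hYC.symm)
    subst hXY
    exact ⟨Walk.nil, fun Z hZ => by
      rw [Walk.support_nil, List.mem_singleton] at hZ
      exact hZ ▸ hxX⟩
  · have hx' : x ∈ ({v}ᶜ : Set V) := hxv
    obtain ⟨p', hp'path, hp'supp⟩ := jp_path hT' (m X) (m Y)
    obtain ⟨p0, hp0⟩ := walkup p'
    refine ⟨p0.copy (hem X) (hem Y), ?_⟩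
    intro Z hZ
    rw [Walk.support_copy] at hZ
    obtain ⟨s₀, hs₀, rfl⟩ := hp0 Z hZ
    have hxs₀ : (⟨x, hx'⟩ : ↥({v}ᶜ : Set V)) ∈ s₀.val := by
      refine hp'supp s₀ hs₀ ⟨?_, ?_⟩
      · show (⟨x, hx'⟩ : ↥({v}ᶜ : Set V)) ∈ (m X).val
        exact hxX
      · show (⟨x, hx'⟩ : ↥({v}ᶜ : Set V)) ∈ (m Y).val
        exact hxY
    have : (⟨x, hx'⟩ : ↥({v}ᶜ : Set V)) ∈ (m (e.symm s₀)).val := by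
      rw [hme]
      exact hxs₀
    exact this
end LiftLemmas
section LiftCase1

variable {G : SimpleGraph V}

lemma lift_case1 {v : V} (hv : IsSimplicial G v) {D₀ : Set V} (hD₀ : IsMaxClique G D₀)
    (hD₀ne : D₀ ≠ closedNbhd G v) (hD₀sub : closedNbhd G v \ {v} ⊆ D₀)
    {T' : SimpleGraph (MCl (G.induce ({v}ᶜ : Set V)))}
    (hT' : IsCliqueTree (G.induce ({v}ᶜ : Set V)) T') :
    ∃ T : SimpleGraph (MCl G), IsCliqueTree G T := by
  classical
  set C := closedNbhd G v with hCdef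
  have hC : IsMaxClique G C := closedNbhd_maxClique hv
  have hvD₀ : v ∉ D₀ := fun h => hD₀ne (maxClique_of_mem_v hv hD₀ h)
  have hsubC : ∀ {D : Set V}, IsMaxClique G D → D ⊆ C → D = C :=
    fun hD hsub => hD.2 _ hC.1 hsub
  have himgmax : ∀ s : MCl (G.induce ({v}ᶜ : Set V)),
      IsMaxClique G (Subtype.val '' s.val) ∧ Subtype.val '' s.val ≠ C := by
    intro s
    rcases img_cases hv s with h | heq
    · exact h
    · exfalso
      have hs_res : s.val = Subtype.val ⁻¹' D₀ := by
        refine s.2.2 _ (res_maxClique hD₀ hvD₀).1 ?_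
        intro x hx
        have : (x : V) ∈ Subtype.val '' s.val := ⟨x, hx, rfl⟩
        rw [heq] at this
        exact hD₀sub this
      have : Subtype.val '' s.val = D₀ := by rw [hs_res, img_res_eq hvD₀]
      have hD₀eq : D₀ = C \ {v} := by rw [← this, heq]
      exact hD₀ne (hsubC hD₀ (hD₀eq ▸ Set.diff_subset))
  set φ : MCl (G.induce ({v}ᶜ : Set V)) → MCl G := fun s => ⟨_, (himgmax s).1⟩ with hφdef
  have hφC : ∀ s, (φ s).val ≠ C := fun s => (himgmax s).2
  set Cnode : MCl G := ⟨C, hC⟩ with hCnode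
  set D₀node : MCl G := ⟨D₀, hD₀⟩ with hD₀node
  have hD₀C : D₀node.val ≠ C := hD₀ne
  have hresmax : ∀ X : MCl G, X.val ≠ C →
      IsMaxClique (G.induce ({v}ᶜ : Set V)) (Subtype.val ⁻¹' X.val) :=
    fun X hX => res_maxClique X.2 (fun h => hX (maxClique_of_mem_v hv X.2 h))
  set m : MCl G → MCl (G.induce ({v}ᶜ : Set V)) := fun X =>
    if hX : X.val ≠ C then ⟨_, hresmax X hX⟩ else ⟨_, hresmax D₀node hD₀C⟩ with hmdef
  have hφm : ∀ X (hX : X.val ≠ C), φ (m X) = X := by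
    intro X hX
    refine Subtype.ext ?_
    show Subtype.val '' (m X).val = X.val
    rw [hmdef]
    simp only [dif_pos hX]
    exact img_res_eq (fun h => hX (maxClique_of_mem_v hv X.2 h))
  have hmφ : ∀ s, m (φ s) = s := by
    intro s
    refine Subtype.ext ?_
    show (m (φ s)).val = s.val
    rw [hmdef]
    simp only [dif_pos (hφC s)]
    exact Set.preimage_image_eq _ Subtype.val_injective
  -- the tree with C attached as a leaf at D₀
  set T : SimpleGraph (MCl G) := SimpleGraph.mk
    (fun X Y => (X.val ≠ C ∧ Y.val ≠ C ∧ T'.Adj (m X) (m Y)) ∨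
      (X.val = C ∧ Y = D₀node) ∨ (Y.val = C ∧ X = D₀node))
    (by
      constructor
      rintro X Y (⟨h1, h2, h3⟩ | ⟨h1, h2⟩ | ⟨h1, h2⟩)
      · exact Or.inl ⟨h2, h1, h3.symm⟩
      · exact Or.inr (Or.inr ⟨h1, h2⟩)
      · exact Or.inr (Or.inl ⟨h1, h2⟩))
    (by
      constructor
      rintro X (⟨h1, h2, h3⟩ | ⟨h1, h2⟩ | ⟨h1, h2⟩)
      · exact T'.loopless.irrefl _ h3
      · exact hD₀ne ((congrArg Subtype.val h2).symm.trans h1)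
      · exact hD₀ne ((congrArg Subtype.val h2).symm.trans h1)) with hTdef
  refine ⟨T, ?_⟩
  have hAdjC : ∀ {Z : MCl G}, T.Adj Cnode Z → Z = D₀node := by
    rintro Z (⟨h1, -, -⟩ | ⟨-, h2⟩ | ⟨-, h2⟩)
    · exact absurd rfl h1
    · exact h2
    · exact absurd (congrArg Subtype.val h2).symm hD₀ne
  have hCD₀adj : T.Adj Cnode D₀node := Or.inr (Or.inl ⟨rfl, rfl⟩)
  have walkup : ∀ {s t : MCl (G.induce ({v}ᶜ : Set V))} (w : T'.Walk s t),
      ∃ p : T.Walk (φ s) (φ t), ∀ Z ∈ p.support, ∃ s₀ ∈ w.support, Z = φ s₀ := by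
    intro s t w
    induction w with
    | nil =>
      refine ⟨Walk.nil, fun Z hZ => ?_⟩
      rw [Walk.support_nil, List.mem_singleton] at hZ
      exact ⟨_, by simp, hZ⟩
    | @cons s₁ s₂ t₁ h q ih =>
      obtain ⟨p, hp⟩ := ih
      have hadj : T.Adj (φ s₁) (φ s₂) := by
        refine Or.inl ⟨hφC s₁, hφC s₂, ?_⟩
        rw [hmφ, hmφ]
        exact h
      refine ⟨Walk.cons hadj p, ?_⟩
      intro Z hZ
      rw [Walk.support_cons] at hZ
      rcases List.mem_cons.mp hZ with rfl | hZ
      · exact ⟨s₁, by simp [Walk.support_cons], rfl⟩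
      · obtain ⟨s₀, hs₀, rfl⟩ := hp Z hZ
        exact ⟨s₀, by simp [Walk.support_cons, hs₀], rfl⟩
  have walkdown : ∀ {X Y : MCl G} (w : T.Walk X Y), (∀ Z ∈ w.support, Z.val ≠ C) →
      ∃ w' : T'.Walk (m X) (m Y), w'.support.map φ = w.support ∧
        w'.edges.map (Sym2.map φ) = w.edges := by
    intro X Y w
    induction w with
    | @nil X₁ =>
      intro hall
      refine ⟨Walk.nil, ?_, by simp⟩
      rw [Walk.support_nil, Walk.support_nil, List.map_cons, List.map_nil,
        hφm X₁ (hall X₁ (by simp))]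
    | @cons X₁ X₂ Y₁ h q ih =>
      intro hall
      have hX₁ : X₁.val ≠ C := hall X₁ (by simp [Walk.support_cons])
      have hX₂ : X₂.val ≠ C := hall X₂ (by simp [Walk.support_cons])
      obtain ⟨w', hs, he'⟩ := ih (fun Z hZ => hall Z (by simp [Walk.support_cons, hZ]))
      have hadj : T'.Adj (m X₁) (m X₂) := by
        rcases h with ⟨-, -, h3⟩ | ⟨h1, -⟩ | ⟨h1, -⟩
        · exact h3
        · exact absurd h1 hX₁
        · exact absurd h1 hX₂
      refine ⟨Walk.cons hadj w', ?_, ?_⟩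
      · rw [Walk.support_cons, Walk.support_cons, List.map_cons, hs, hφm X₁ hX₁]
      · rw [Walk.edges_cons, Walk.edges_cons, List.map_cons, he', Sym2.map_pair_eq,
          hφm X₁ hX₁, hφm X₂ hX₂]
  have htree : T.IsTree := by
    constructor
    · haveI : Nonempty (MCl G) := ⟨Cnode⟩
      have hreach : ∀ X : MCl G, T.Reachable X D₀node := by
        intro X
        by_cases hXC : X.val = C
        · have : X = Cnode := Subtype.ext hXC
          rw [this]
          exact hCD₀adj.reachable
        · obtain ⟨w⟩ := hT'.1.1.preconnected (m X) (m D₀node)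
          obtain ⟨p, -⟩ := walkup w
          exact ⟨p.copy (hφm X hXC) (hφm D₀node hD₀C)⟩
      exact ⟨fun X Y => (hreach X).trans (hreach Y).symm⟩
    · intro X c hc
      by_cases hmem : Cnode ∈ c.support
      · have hc' := hc.rotate hmem
        obtain ⟨Z1, h1, q, hq⟩ := Walk.not_nil_iff.mp hc'.not_nil
        have hZ1 : Z1 = D₀node := hAdjC h1
        have hqnil : ¬ q.reverse.Nil := by
          rw [Walk.nil_iff_length_eq, Walk.length_reverse, ← Walk.nil_iff_length_eq]
          intro h0
          have : Z1 = Cnode := by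
            have h0' := Walk.nil_iff_length_eq.mp h0
            exact Walk.eq_of_length_eq_zero h0'
          rw [hZ1] at this
          exact hD₀ne (congrArg Subtype.val this)
        obtain ⟨Z2, h2, q₂, hq₂⟩ := Walk.not_nil_iff.mp hqnil
        have hZ2 : Z2 = D₀node := hAdjC h2
        have hnodup := hc'.isTrail.edges_nodup
        rw [hq, Walk.edges_cons] at hnodup
        have hhead := (List.nodup_cons.mp hnodup).1
        apply hhead
        have hmem2 : s(Cnode, Z2) ∈ q.reverse.edges := by
          rw [hq₂, Walk.edges_cons]
          exact List.mem_cons_self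
        rw [Walk.edges_reverse, List.mem_reverse] at hmem2
        have hZZ : Z2 = Z1 := hZ2.trans hZ1.symm
        exact hZZ ▸ hmem2
      · have hall : ∀ Z ∈ c.support, Z.val ≠ C :=
          fun Z hZ h => hmem ((Subtype.ext h : Z = Cnode) ▸ hZ)
        obtain ⟨c₀, hs, he'⟩ := walkdown c hall
        have hc₀ : c₀.IsCycle := by
          rw [Walk.isCycle_def]
          refine ⟨?_, ?_, ?_⟩
          · rw [Walk.isTrail_def]
            exact List.Nodup.of_map _ (he' ▸ hc.isTrail.edges_nodup)
          · intro h0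
            have h1 := congrArg (fun (l : List (MCl G)) => l.length) hs
            simp only [List.length_map] at h1
            rw [h0] at h1
            simp only [Walk.support_nil, List.length_cons, List.length_nil] at h1
            have h2 : c.support.length = c.length + 1 := c.length_support
            have h3 : 0 < c.length := by
              rcases Nat.eq_zero_or_pos c.length with h | h
              · exact absurd (Walk.nil_iff_length_eq.mpr h) hc.not_nil
              · exact h
            omega
          · have htl : c.support.tail = c₀.support.tail.map φ := by
              rw [← hs]
              cases c₀.support <;> simp
            exact List.Nodup.of_map _ (htl ▸ hc.2)
        exact hT'.1.2 c₀ hc₀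
  refine junction_of_jp htree ?_
  intro x X Y hxX hxY
  by_cases hxv : x = v
  · subst hxv
    have hXY : X = Y := Subtype.ext
      ((maxClique_of_mem_v hv X.2 hxX).trans (maxClique_of_mem_v hv Y.2 hxY).symm)
    subst hXY
    exact ⟨Walk.nil, fun Z hZ => by
      rw [Walk.support_nil, List.mem_singleton] at hZ
      exact hZ ▸ hxX⟩
  · have hx' : x ∈ ({v}ᶜ : Set V) := hxv
    -- helper: a good walk from D₀node to any Z with x ∈ Z, Z ≠ C
    have main : ∀ (Z : MCl G) (hZC : Z.val ≠ C), x ∈ Z.val → x ∈ D₀ →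
        ∃ p : T.Walk D₀node Z, ∀ W ∈ p.support, x ∈ W.val := by
      intro Z hZC hxZ hxD₀
      obtain ⟨p', hp'path, hp'supp⟩ := jp_path hT' (m D₀node) (m Z)
      obtain ⟨p0, hp0⟩ := walkup p'
      refine ⟨p0.copy (hφm D₀node hD₀C) (hφm Z hZC), ?_⟩
      intro W hW
      rw [Walk.support_copy] at hW
      obtain ⟨s₀, hs₀, rfl⟩ := hp0 W hW
      have hxs₀ : (⟨x, hx'⟩ : ↥({v}ᶜ : Set V)) ∈ s₀.val := by
        refine hp'supp s₀ hs₀ ⟨?_, ?_⟩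
        · show (⟨x, hx'⟩ : ↥({v}ᶜ : Set V)) ∈ (m D₀node).val
          rw [hmdef]
          simp only [dif_pos hD₀C]
          exact hxD₀
        · show (⟨x, hx'⟩ : ↥({v}ᶜ : Set V)) ∈ (m Z).val
          rw [hmdef]
          simp only [dif_pos hZC]
          exact hxZ
      exact ⟨⟨x, hx'⟩, hxs₀, rfl⟩
    by_cases hXC : X.val = C <;> by_cases hYC : Y.val = C
    · have hXY : X = Y := Subtype.ext (hXC.trans hYC.symm)
      subst hXY
      exact ⟨Walk.nil, fun Z hZ => by
        rw [Walk.support_nil, List.mem_singleton] at hZ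
        exact hZ ▸ hxX⟩
    · -- X = C
      have hxC : x ∈ C := hXC ▸ hxX
      have hxD₀ : x ∈ D₀ := hD₀sub ⟨hxC, hxv⟩
      obtain ⟨p, hp⟩ := main Y hYC hxY hxD₀
      have hXeq : X = Cnode := Subtype.ext hXC
      subst hXeq
      refine ⟨Walk.cons hCD₀adj p, ?_⟩
      intro W hW
      rw [Walk.support_cons] at hW
      rcases List.mem_cons.mp hW with rfl | hW
      · exact hxC
      · exact hp W hW
    · -- Y = C
      have hxC : x ∈ C := hYC ▸ hxY
      have hxD₀ : x ∈ D₀ := hD₀sub ⟨hxC, hxv⟩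
      obtain ⟨p, hp⟩ := main X hXC hxX hxD₀
      have hYeq : Y = Cnode := Subtype.ext hYC
      subst hYeq
      refine ⟨(Walk.cons hCD₀adj p).reverse, ?_⟩
      intro W hW
      rw [Walk.support_reverse, List.mem_reverse, Walk.support_cons] at hW
      rcases List.mem_cons.mp hW with rfl | hW
      · exact hxC
      · exact hp W hW
    · -- neither is C
      have hxD₀dummy : True := trivial
      obtain ⟨p', hp'path, hp'supp⟩ := jp_path hT' (m X) (m Y)
      obtain ⟨p0, hp0⟩ := walkup p'
      refine ⟨p0.copy (hφm X hXC) (hφm Y hYC), ?_⟩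
      intro W hW
      rw [Walk.support_copy] at hW
      obtain ⟨s₀, hs₀, rfl⟩ := hp0 W hW
      have hxs₀ : (⟨x, hx'⟩ : ↥({v}ᶜ : Set V)) ∈ s₀.val := by
        refine hp'supp s₀ hs₀ ⟨?_, ?_⟩
        · show (⟨x, hx'⟩ : ↥({v}ᶜ : Set V)) ∈ (m X).val
          rw [hmdef]
          simp only [dif_pos hXC]
          exact hxX
        · show (⟨x, hx'⟩ : ↥({v}ᶜ : Set V)) ∈ (m Y).val
          rw [hmdef]
          simp only [dif_pos hYC]
          exact hxY
      exact ⟨⟨x, hx'⟩, hxs₀, rfl⟩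

end LiftCase1
section ExistenceMain

lemma exists_cliqueTree_aux : ∀ (n : ℕ) {V' : Type u_1} [Fintype V'] (G' : SimpleGraph V'),
    Nat.card V' ≤ n → G'.Connected → IsChordal G' →
    ∃ T : SimpleGraph (MCl G'), IsCliqueTree G' T := by
  intro n
  induction n with
  | zero =>
    intro V' _ G' hcard hconn _
    exfalso
    haveI := hconn.nonempty
    have : 0 < Nat.card V' := Nat.card_pos
    omega
  | succ n ih =>
    intro V' instF G' hcard hconn hch'
    haveI : Nonempty V' := hconn.nonempty
    obtain ⟨v, hv⟩ := exists_simplicial hch'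
    have hC := closedNbhd_maxClique hv
    by_cases hsingle : ∀ z : V', z = v
    · -- single-vertex graph
      have huniv : ∀ X : MCl G', X = (⟨closedNbhd G' v, hC⟩ : MCl G') := by
        intro X
        refine Subtype.ext ?_
        exact X.2.2 _ hC.1 (fun z hz => by
          rw [hsingle z]; exact Set.mem_insert _ _)
      refine ⟨⊥, ⟨?_, ?_⟩, ?_⟩
      · haveI : Nonempty (MCl G') := ⟨⟨_, hC⟩⟩
        refine ⟨fun X Y => ?_⟩
        rw [huniv X, huniv Y]
      · intro X c hc
        cases c with
        | nil => exact hc.ne_nil rfl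
        | cons h q => exact h.elim
      · intro C₁ C₂ p hp C₃ hC₃
        have h13 : C₁ = C₃ := (huniv C₁).trans (huniv C₃).symm
        exact fun z hz => h13 ▸ hz.1
    · push_neg at hsingle
      obtain ⟨z0, hz0⟩ := hsingle
      haveI : Fintype ↥({v}ᶜ : Set V') := Fintype.ofFinite _
      have hconn' : (G'.induce ({v}ᶜ : Set V')).Connected := by
        haveI : Nonempty ↥({v}ᶜ : Set V') := ⟨⟨z0, hz0⟩⟩
        refine ⟨fun a b => ?_⟩
        · have ha : (a : V') ≠ v := a.2
          have hb : (b : V') ≠ v := b.2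
          obtain ⟨w⟩ := hconn.preconnected a.val b.val
          obtain ⟨q, hq⟩ := walk_avoid hv w.length ha hb w le_rfl
          have hmem : ∀ x ∈ q.support, x ∈ ({v}ᶜ : Set V') := by
            intro x hx hxv
            rw [Set.mem_singleton_iff] at hxv
            exact hq (hxv ▸ hx)
          have := walk_induce q hmem a.2 b.2
          simpa using this
      have hcard' : Nat.card ↥({v}ᶜ : Set V') ≤ n := by
        have h1 : Nat.card ↥({v}ᶜ : Set V') = ({v}ᶜ : Set V').ncard :=
          Nat.card_coe_set_eq _
        have h2 : ({v}ᶜ : Set V').ncard < (Set.univ : Set V').ncard := by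
          refine Set.ncard_lt_ncard ?_ Set.finite_univ
          rw [Set.ssubset_univ_iff]
          intro h
          have : v ∈ ({v}ᶜ : Set V') := h ▸ Set.mem_univ v
          exact this rfl
        rw [Set.ncard_univ] at h2
        omega
      obtain ⟨T', hT'⟩ := ih _ hcard' hconn' (chordal_induce hch' _)
      by_cases hcase : ∃ D : Set V', IsMaxClique G' D ∧ D ≠ closedNbhd G' v ∧
          closedNbhd G' v \ {v} ⊆ D
      · obtain ⟨D₀, h1, h2, h3⟩ := hcase
        exact lift_case1 hv h1 h2 h3 hT'
      · exact lift_case2 hv hcase hT'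

lemma exists_cliqueTree {G : SimpleGraph V} (hconn : G.Connected) (hch : IsChordal G) :
    ∃ T : SimpleGraph (MCl G), IsCliqueTree G T :=
  exists_cliqueTree_aux (Nat.card V) G le_rfl hconn hch

end ExistenceMain
section Counting

variable {G : SimpleGraph V}

/-- The label of an edge of the clique tree. -/
def lab (G : SimpleGraph V) : Sym2 (MCl G) → Set V :=
  Sym2.lift ⟨fun X Y => X.val ∩ Y.val, fun X Y => Set.inter_comm _ _⟩

@[simp] lemma lab_mk {X Y : MCl G} : lab G s(X, Y) = X.val ∩ Y.val := rfl

lemma nodup_all_eq_length_le {β : Type*} (l : List β) (hn : l.Nodup)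
    (he : ∀ a ∈ l, ∀ b ∈ l, a = b) : l.length ≤ 1 := by
  cases l with
  | nil => simp
  | cons a t =>
    cases t with
    | nil => simp
    | cons b t' =>
      exfalso
      have hab : a = b := he a (by simp) b (by simp)
      rw [List.nodup_cons] at hn
      exact hn.1 (hab ▸ (by simp : b ∈ b :: t'))

lemma seps_eq_image {T : SimpleGraph (MCl G)} (hT : IsCliqueTree G T)
    [Fintype T.edgeSet] [DecidableEq (Set V)] :
    {S : Set V | IsMinSeparator G S} = ↑(T.edgeFinset.image (lab G)) := by
  ext S
  simp only [Set.mem_setOf_eq, Finset.coe_image, Set.mem_image, Finset.mem_coe,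
    mem_edgeFinset]
  constructor
  · intro hS
    obtain ⟨A, B, hAB, hlab⟩ := minSeparator_is_label hT hS
    exact ⟨s(A, B), (mem_edgeSet T).mpr hAB, hlab⟩
  · rintro ⟨e, he, rfl⟩
    induction e using Sym2.ind with
    | _ X Y => exact label_isMinSeparator hT ((mem_edgeSet T).mp he)

lemma card_MCl (G : SimpleGraph V) :
    {s : Set V | IsMaxClique G s}.ncard = Nat.card (MCl G) := by
  rw [← Nat.card_coe_set_eq]
  exact Nat.card_congr (Equiv.subtypeEquivRight (fun x => Iff.rfl))

/-- If the separator count and incomparability conditions hold, any two clique trees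
coincide (one inclusion of edges). -/
lemma unique_of_conds
    (hcount : {S : Set V | IsMinSeparator G S}.ncard = {s : Set V | IsMaxClique G s}.ncard - 1)
    (hincomp : ∀ S S' : Set V, IsMinSeparator G S → IsMinSeparator G S' → S ≠ S' →
      ¬ S ⊆ S' ∧ ¬ S' ⊆ S)
    {T T' : SimpleGraph (MCl G)} (hT : IsCliqueTree G T) (hT' : IsCliqueTree G T')
    {X Y : MCl G} (hXY : T.Adj X Y) : T'.Adj X Y := by
  classical
  haveI : Fintype (MCl G) := Fintype.ofFinite _
  haveI : Fintype T'.edgeSet := Fintype.ofFinite _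
  have hK := hT'.1.card_edgeFinset
  have h1 : {S : Set V | IsMinSeparator G S}.ncard = (T'.edgeFinset.image (lab G)).card := by
    rw [seps_eq_image hT', Set.ncard_coe_finset]
  have hcard : (T'.edgeFinset.image (lab G)).card = T'.edgeFinset.card := by
    have h2 := hcount
    rw [card_MCl, Nat.card_eq_fintype_card, ← hK, h1] at h2
    simpa using h2
  have hinj : Set.InjOn (lab G) ↑T'.edgeFinset := Finset.card_image_iff.mp hcard
  -- the path in T' joining X and Y
  have hS : IsMinSeparator G (X.val ∩ Y.val) := label_isMinSeparator hT hXY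
  obtain ⟨w0⟩ := hT'.1.1.preconnected X Y
  have hpath : w0.bypass.IsPath := w0.bypass_isPath
  have hsupp : ∀ Z ∈ w0.bypass.support, X.val ∩ Y.val ⊆ Z.val :=
    fun Z hZ => hT'.2 X Y w0.bypass hpath Z hZ
  have hlabS : ∀ e ∈ w0.bypass.edges, lab G e = X.val ∩ Y.val := by
    intro e he
    induction e using Sym2.ind with
    | _ P Q =>
      have hPQ : T'.Adj P Q := w0.bypass.adj_of_mem_edges he
      have hSP := hsupp P (w0.bypass.fst_mem_support_of_mem_edges he)
      have hSQ := hsupp Q (w0.bypass.snd_mem_support_of_mem_edges he)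
      have hmin : IsMinSeparator G (P.val ∩ Q.val) := label_isMinSeparator hT' hPQ
      by_contra hne
      rw [lab_mk] at hne
      exact (hincomp _ _ hS hmin (fun h => hne h.symm)).1 (Set.subset_inter hSP hSQ)
  have hlen1 : w0.bypass.length = 1 := by
    have hne0 : w0.bypass.length ≠ 0 := by
      intro h
      exact hXY.ne (Walk.eq_of_length_eq_zero h)
    have hle : w0.bypass.edges.length ≤ 1 := by
      refine nodup_all_eq_length_le _ hpath.isTrail.edges_nodup ?_
      intro a ha b hb
      refine hinj ?_ ?_ ((hlabS a ha).trans (hlabS b hb).symm)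
      · simpa [mem_edgeFinset] using w0.bypass.edges_subset_edgeSet ha
      · simpa [mem_edgeFinset] using w0.bypass.edges_subset_edgeSet hb
    rw [Walk.length_edges] at hle
    omega
  exact Walk.adj_of_length_eq_one hlen1

/-- Exchange produces a second, different clique tree. -/
lemma exch_exists {T : SimpleGraph (MCl G)} (hT : IsCliqueTree G T) {A B D : MCl G}
    (hAB : T.Adj A B) (hDB : (eDel T A B).Reachable D B) (hDne : D ≠ B)
    (hsub : A.val ∩ B.val ⊆ D.val) :
    ∃ T₂ : SimpleGraph (MCl G), IsCliqueTree G T₂ ∧ T₂ ≠ T :=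
  ⟨exch T A B D, (exchange_isCliqueTree hT hAB hDB hDne hsub).1,
    exchange_ne hT hAB hDB hDne hsub⟩

lemma eDel_swap {α : Type*} (T : SimpleGraph α) (A B : α) : eDel T B A = eDel T A B := by
  unfold eDel
  rw [Sym2.eq_swap]

/-- From two distinct tree edges with comparable labels, produce a second clique tree. -/
lemma two_trees_of_comparable {T : SimpleGraph (MCl G)} (hT : IsCliqueTree G T)
    {A B D₁ D₂ : MCl G} (hAB : T.Adj A B) (hD : T.Adj D₁ D₂)
    (hne : s(A, B) ≠ s(D₁, D₂)) (hsub : A.val ∩ B.val ⊆ D₁.val ∩ D₂.val) :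
    ∃ T₂ : SimpleGraph (MCl G), IsCliqueTree G T₂ ∧ T₂ ≠ T := by
  have hD12 : D₁ ≠ D₂ := hD.ne
  rcases reachable_eDel_side hT.1.1 A B D₁ with h1A | h1B <;>
    rcases reachable_eDel_side hT.1.1 A B D₂ with h2A | h2B
  · -- both on the A-side : exchange across the edge viewed as (B,A)
    have hBA : T.Adj B A := hAB.symm
    have h1A' : (eDel T B A).Reachable D₁ A := by rw [eDel_swap]; exact h1A
    have h2A' : (eDel T B A).Reachable D₂ A := by rw [eDel_swap]; exact h2A
    have hsub' : B.val ∩ A.val ⊆ D₁.val ∩ D₂.val := by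
      rw [Set.inter_comm]; exact hsub
    by_cases hD1 : D₁ = A
    · refine exch_exists hT hBA h2A' ?_ (hsub'.trans Set.inter_subset_right)
      rintro rfl; exact hD12 hD1
    · exact exch_exists hT hBA h1A' hD1 (hsub'.trans Set.inter_subset_left)
  · -- mixed: the edge (D₁,D₂) crosses the cut, so it equals (A,B)
    exfalso
    have : (eDel T A B).Adj D₁ D₂ := eDel_adj.mpr ⟨hD, fun h => hne (h.symm)⟩
    exact not_reachable_eDel hT.1.2 hAB (h1A.symm.trans (this.reachable.trans h2B))
  · exfalso
    have : (eDel T A B).Adj D₁ D₂ := eDel_adj.mpr ⟨hD, fun h => hne (h.symm)⟩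
    exact not_reachable_eDel hT.1.2 hAB (h2A.symm.trans (this.symm.reachable.trans h1B))
  · -- both on the B-side
    by_cases hD1 : D₁ = B
    · refine exch_exists hT hAB h2B ?_ (hsub.trans Set.inter_subset_right)
      rintro rfl; exact hD12 hD1
    · exact exch_exists hT hAB h1B hD1 (hsub.trans Set.inter_subset_left)

end Counting
theorem cliqueTree_unique_iff {V : Type*} [Fintype V]
    (G : SimpleGraph V) (hconn : G.Connected) (hch : IsChordal G) :
    (∀ T T' : SimpleGraph {s : Set V // IsMaxClique G s},
      IsCliqueTree G T → IsCliqueTree G T' → T = T') ↔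
    ({S : Set V | IsMinSeparator G S}.ncard = {s : Set V | IsMaxClique G s}.ncard - 1 ∧
      ∀ S S' : Set V, IsMinSeparator G S → IsMinSeparator G S' → S ≠ S' →
        ¬ S ⊆ S' ∧ ¬ S' ⊆ S) := by
  classical
  constructor
  · intro huniq
    obtain ⟨T, hT⟩ := exists_cliqueTree hconn hch
    haveI : Fintype (MCl G) := Fintype.ofFinite _
    haveI : Fintype T.edgeSet := Fintype.ofFinite _
    have hnocoll : ∀ e₁ ∈ T.edgeFinset, ∀ e₂ ∈ T.edgeFinset,
        lab G e₁ ⊆ lab G e₂ → e₁ = e₂ := by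
      intro e₁ he₁ e₂ he₂ hsub
      by_contra hne
      induction e₁ using Sym2.ind with
      | _ A B =>
        induction e₂ using Sym2.ind with
        | _ D₁ D₂ =>
          obtain ⟨T₂, h1, h2⟩ := two_trees_of_comparable hT
            ((mem_edgeSet T).mp (mem_edgeFinset.mp he₁))
            ((mem_edgeSet T).mp (mem_edgeFinset.mp he₂)) hne hsub
          exact h2 (huniq T₂ T h1 hT)
    have hcount : {S : Set V | IsMinSeparator G S}.ncard
        = {s : Set V | IsMaxClique G s}.ncard - 1 := by
      have h1 : {S : Set V | IsMinSeparator G S}.ncard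
          = (T.edgeFinset.image (lab G)).card := by
        rw [seps_eq_image hT, Set.ncard_coe_finset]
      have hinj : Set.InjOn (lab G) ↑T.edgeFinset := by
        intro a ha b hb hab
        exact hnocoll a (by simpa using ha) b (by simpa using hb) hab.subset
      have h2 := Finset.card_image_of_injOn hinj
      have hK := hT.1.card_edgeFinset
      rw [card_MCl, Nat.card_eq_fintype_card, ← hK, h1, h2]
      omega
    refine ⟨hcount, ?_⟩
    have key : ∀ S S' : Set V, IsMinSeparator G S → IsMinSeparator G S' → S ≠ S' →
        ¬ S ⊆ S' := by
      intro S S' hS hS' hne hsub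
      obtain ⟨A, B, hAB, hl⟩ := minSeparator_is_label hT hS
      obtain ⟨D₁, D₂, hD, hl'⟩ := minSeparator_is_label hT hS'
      have he : s(A, B) = s(D₁, D₂) := by
        refine hnocoll _ (mem_edgeFinset.mpr ((mem_edgeSet T).mpr hAB)) _
          (mem_edgeFinset.mpr ((mem_edgeSet T).mpr hD)) ?_
        rw [lab_mk, lab_mk, hl, hl']
        exact hsub
      have heq := congrArg (lab G) he
      rw [lab_mk, lab_mk, hl, hl'] at heq
      exact hne heq
    exact fun S S' hS hS' hne => ⟨key S S' hS hS' hne, key S' S hS' hS hne.symm⟩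
  · rintro ⟨hcount, hincomp⟩ T T' hT hT'
    ext X Y
    exact ⟨fun h => unique_of_conds hcount hincomp hT hT' h,
           fun h => unique_of_conds hcount hincomp hT' hT h⟩

end Chordal
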